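/- arXiv:2305.01551 — 3 statements merged into one kernel-verified Lean document; each statement's English description precedes it below -/
import Mathlib

section
/- Let 0 < α < 1, l > 0, and let φ, ψ be complex-valued absolutely continuous functions on [0,l]. Then ∫_0^l (D_{0+}^α φ)(x)·ψ(x) dx = ψ(l)·(I_{0+}^{1−α} φ)(l) − (1/Γ(1−α)) ∫_0^l φ(t) ( ∫_t^l ψ′(x)·(x−t)^{−α} dx ) dt. -/
open MeasureTheory Set Filter Topology

/-- Left Riemann–Liouville fractional integral of order `α` based at `a` (complex-valued). -/
noncomputable def RLIplus (α a : ℝ) (f : ℝ → ℂ) (x : ℝ) : ℂ :=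
  ((1 / Real.Gamma α : ℝ) : ℂ) * ∫ t in a..x, f t * (((x - t) ^ (α - 1) : ℝ) : ℂ)

/-- Right Riemann–Liouville fractional integral of order `α` based at `b` (complex-valued). -/
noncomputable def RLIminus (α b : ℝ) (f : ℝ → ℂ) (x : ℝ) : ℂ :=
  ((1 / Real.Gamma α : ℝ) : ℂ) * ∫ t in x..b, f t * (((t - x) ^ (α - 1) : ℝ) : ℂ)

/-- Left Riemann–Liouville fractional derivative of order `α` (`0 < α < 1`): `d/dx (I_{a+}^{1-α} f)`. -/
noncomputable def RLDplus (α a : ℝ) (f : ℝ → ℂ) (x : ℝ) : ℂ :=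
  deriv (RLIplus (1 - α) a f) x

/-- Right Riemann–Liouville fractional derivative of order `α` (`0 < α < 1`): `-d/dx (I_{b-}^{1-α} f)`. -/
noncomputable def RLDminus (α b : ℝ) (f : ℝ → ℂ) (x : ℝ) : ℂ :=
  - deriv (RLIminus (1 - α) b f) x

/-- `f` is absolutely continuous on `[a,b]` with (a.e.) derivative `f'`:
there is an integrable `f'` with `f x = f a + ∫_a^x f'`. -/
def ACDerivOn (a b : ℝ) (f f' : ℝ → ℂ) : Prop :=
  IntervalIntegrable f' MeasureTheory.volume a b ∧
    ∀ x ∈ Set.Icc a b, f x = f a + ∫ t in a..x, f' t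


lemma ae_hasDerivAt_intervalIntegral (g : ℝ → ℂ) (hg : Integrable g) :
    ∀ᵐ x : ℝ, HasDerivAt (fun y => ∫ t in (0:ℝ)..y, g t) (g x) x := by
  filter_upwards [IsUnifLocDoublingMeasure.ae_tendsto_average_norm_sub
    (μ := (volume : Measure ℝ)) hg.locallyIntegrable 1] with x hx
  rw [hasDerivAt_iff_tendsto_slope]
  have key : Tendsto (fun y : ℝ => ⨍ t in Metric.closedBall x |y - x|, ‖g t - g x‖) (𝓝[≠] x)
      (𝓝 0) := by
    apply hx (fun _ => x) (fun y => |y - x|)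
    · have h1 : Tendsto (fun y : ℝ => |y - x|) (𝓝[≠] x) (𝓝 0) := by
        have h : Tendsto (fun y : ℝ => |y - x|) (𝓝 x) (𝓝 0) := by
          have h2 : Continuous fun y : ℝ => |y - x| :=
            (continuous_id.sub continuous_const).abs
          simpa using h2.tendsto x
        exact h.mono_left nhdsWithin_le_nhds
      rw [tendsto_nhdsWithin_iff]
      refine ⟨h1, ?_⟩
      filter_upwards [self_mem_nhdsWithin] with y hy
      have : y ≠ x := by simpa using hy
      simpa [abs_pos, sub_eq_zero] using this
    · filter_upwards [self_mem_nhdsWithin] with y _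
      simp [Metric.mem_closedBall, abs_nonneg]
  rw [tendsto_iff_norm_sub_tendsto_zero]
  apply squeeze_zero' (f := fun y => ‖slope (fun y => ∫ t in (0:ℝ)..y, g t) x y - g x‖)
    (g := fun y => 2 * ⨍ t in Metric.closedBall x |y - x|, ‖g t - g x‖)
  · filter_upwards with y using norm_nonneg _
  · filter_upwards [self_mem_nhdsWithin] with y hy
    have hyx : y ≠ x := by simpa using hy
    have habs : 0 < |y - x| := by simpa [abs_pos, sub_eq_zero] using hyx
    have hFx : (∫ t in (0:ℝ)..y, g t) - ∫ t in (0:ℝ)..x, g t = ∫ t in x..y, g t := by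
      rw [← intervalIntegral.integral_add_adjacent_intervals hg.intervalIntegrable
        hg.intervalIntegrable]
      ring
    have hslope : slope (fun y => ∫ t in (0:ℝ)..y, g t) x y - g x
        = (y - x)⁻¹ • (∫ t in x..y, (g t - g x)) := by
      rw [slope_def_module, hFx, intervalIntegral.integral_sub hg.intervalIntegrable
        intervalIntegrable_const, intervalIntegral.integral_const]
      rw [smul_sub, smul_smul, inv_mul_cancel₀ (sub_ne_zero.2 hyx)]
      simp
    rw [hslope]
    rw [norm_smul]
    have hsub : Set.uIoc x y ⊆ Metric.closedBall x |y - x| := by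
      intro t ht
      rw [Real.closedBall_eq_Icc]
      rcases ht with ⟨h1, h2⟩
      constructor
      · have : x - |y - x| ≤ min x y := by
          rcases le_total x y with h | h
          · simp only [min_eq_left h]; nlinarith [abs_nonneg (y-x)]
          · rw [min_eq_right h, abs_of_nonpos (by linarith)]; linarith
        linarith [this.trans_lt h1]
      · have : max x y ≤ x + |y - x| := by
          rcases le_total x y with h | h
          · rw [max_eq_right h, abs_of_nonneg (by linarith)]; linarith
          · simp only [max_eq_left h]; nlinarith [abs_nonneg (y-x)]
        linarith [h2.trans this]
    have hint : IntegrableOn (fun t => ‖g t - g x‖) (Metric.closedBall x |y - x|) := by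
      refine ((hg.integrableOn.sub ((integrableOn_const_iff).mpr (Or.inr ?_))).norm)
      rw [Real.volume_closedBall]
      exact ENNReal.ofReal_lt_top
    have h1 : ‖∫ t in x..y, (g t - g x)‖ ≤ ∫ t in Metric.closedBall x |y - x|, ‖g t - g x‖ := by
      rw [intervalIntegral.norm_intervalIntegral_eq]
      refine (norm_integral_le_integral_norm _).trans ?_
      refine setIntegral_mono_set hint ?_ (HasSubset.Subset.eventuallyLE hsub)
      filter_upwards with t using norm_nonneg _
    have hvol : (volume (Metric.closedBall x |y - x|)).toReal = 2 * |y - x| := by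
      rw [Real.volume_closedBall, ENNReal.toReal_ofReal (by positivity)]
    have havg : (⨍ t in Metric.closedBall x |y - x|, ‖g t - g x‖)
        = (2 * |y - x|)⁻¹ * ∫ t in Metric.closedBall x |y - x|, ‖g t - g x‖ := by
      rw [setAverage_eq, measureReal_def, hvol]
      simp [smul_eq_mul]
    rw [havg]
    have hnorm : ‖(y - x)⁻¹‖ = |y - x|⁻¹ := by
      rw [norm_inv, Real.norm_eq_abs]
    rw [hnorm]
    calc |y - x|⁻¹ * ‖∫ t in x..y, (g t - g x)‖
        ≤ |y - x|⁻¹ * ∫ t in Metric.closedBall x |y - x|, ‖g t - g x‖ := by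
          exact mul_le_mul_of_nonneg_left h1 (by positivity)
      _ = 2 * ((2 * |y - x|)⁻¹ * ∫ t in Metric.closedBall x |y - x|, ‖g t - g x‖) := by
          field_simp
  · simpa using key.const_mul 2

lemma integral_triangle_swap {b : ℝ} (hb : 0 ≤ b) (f : ℝ → ℝ → ℂ)
    (hf : Integrable (fun p : ℝ × ℝ => if p.2 ≤ p.1 then f p.1 p.2 else 0)
      ((volume.restrict (Ioc 0 b)).prod (volume.restrict (Ioc 0 b)))) :
    ∫ x in (0:ℝ)..b, (∫ t in (0:ℝ)..x, f x t) = ∫ t in (0:ℝ)..b, ∫ x in t..b, f x t := by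
  have key := integral_integral_swap (μ := volume.restrict (Ioc 0 b)) (ν := volume.restrict (Ioc 0 b)) (f := fun x t => if t ≤ x then f x t else 0) hf
  have L : ∫ x in (0:ℝ)..b, (∫ t in (0:ℝ)..x, f x t)
      = ∫ x in Ioc (0:ℝ) b, ∫ t in Ioc (0:ℝ) b, (if t ≤ x then f x t else 0) := by
    rw [intervalIntegral.integral_of_le hb]
    refine setIntegral_congr_fun measurableSet_Ioc (fun x hx => ?_)
    rw [intervalIntegral.integral_of_le hx.1.le]
    have h1 : ∫ t in Ioc (0:ℝ) b, (if t ≤ x then f x t else 0)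
        = ∫ t in Ioc (0:ℝ) b, (Iic x).indicator (f x) t := by
      refine setIntegral_congr_fun measurableSet_Ioc (fun t _ => ?_)
      simp [indicator, mem_Iic]
    rw [h1, setIntegral_indicator measurableSet_Iic]
    congr 1
    rw [Ioc_inter_Iic, min_eq_right hx.2]
  have R : ∫ t in (0:ℝ)..b, (∫ x in t..b, f x t)
      = ∫ t in Ioc (0:ℝ) b, ∫ x in Ioc (0:ℝ) b, (if t ≤ x then f x t else 0) := by
    rw [intervalIntegral.integral_of_le hb]
    refine setIntegral_congr_fun measurableSet_Ioc (fun t ht => ?_)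
    rw [intervalIntegral.integral_of_le ht.2]
    have h1 : ∫ x in Ioc (0:ℝ) b, (if t ≤ x then f x t else 0)
        = ∫ x in Ioc (0:ℝ) b, (Ici t).indicator (fun x => f x t) x := by
      refine setIntegral_congr_fun measurableSet_Ioc (fun x _ => ?_)
      simp [indicator, mem_Ici]
    rw [h1, setIntegral_indicator measurableSet_Ici]
    have h2 : Ioc (0:ℝ) b ∩ Ici t = Icc t b := by
      ext x; simp only [mem_inter_iff, mem_Ioc, mem_Ici, mem_Icc]
      constructor
      · rintro ⟨⟨_, h2⟩, h3⟩; exact ⟨h3, h2⟩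
      · rintro ⟨h1', h2⟩; exact ⟨⟨lt_of_lt_of_le ht.1 h1', h2⟩, h1'⟩
    rw [h2, integral_Icc_eq_integral_Ioc]
  rw [L, R]
  exact key

lemma ker_intervalIntegrable {α : ℝ} (hα1 : α < 1) (t a b : ℝ) :
    IntervalIntegrable (fun x => ((x - t) ^ (-α) : ℝ)) volume a b := by
  have h := (intervalIntegral.intervalIntegrable_rpow' (a := a - t) (b := b - t)
    (r := -α) (by linarith)).comp_sub_right t
  simpa using h

lemma ker_intervalIntegrableC {α : ℝ} (hα1 : α < 1) (t a b : ℝ) :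
    IntervalIntegrable (fun x => (((x - t) ^ (-α) : ℝ) : ℂ)) volume a b := by
  have h := ker_intervalIntegrable hα1 t a b
  rw [intervalIntegrable_iff] at h ⊢
  exact h.ofReal

lemma ker_integral {α : ℝ} (hα1 : α < 1) {t b : ℝ} (ht : t ≤ b) :
    (∫ x in t..b, ((x - t) ^ (-α) : ℝ)) = (b - t) ^ (1 - α) / (1 - α) := by
  have h1 : (∫ x in t..b, ((x - t) ^ (-α) : ℝ))
      = ∫ x in (t - t)..(b - t), (x ^ (-α) : ℝ) :=
    intervalIntegral.integral_comp_sub_right (fun x => (x ^ (-α) : ℝ)) t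
  rw [h1, sub_self]
  rw [integral_rpow (Or.inl (by linarith))]
  rw [Real.zero_rpow (by intro h; apply absurd h; intro h'; linarith [h'] )]
  · ring_nf

lemma ker_integralC {α : ℝ} (hα1 : α < 1) {t b : ℝ} (ht : t ≤ b) :
    (∫ x in t..b, (((x - t) ^ (-α) : ℝ) : ℂ)) = (((b - t) ^ (1 - α) / (1 - α) : ℝ) : ℂ) := by
  rw [intervalIntegral.integral_ofReal, ker_integral hα1 ht]

lemma ite_eq_indicator_triangle (h : ℝ × ℝ → ℂ) :
    (fun p : ℝ × ℝ => if p.2 ≤ p.1 then h p else 0)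
      = Set.indicator {p : ℝ × ℝ | p.2 ≤ p.1} h := by
  ext p; simp [Set.indicator_apply, Set.mem_setOf_eq]

lemma measurableSet_triangle : MeasurableSet {p : ℝ × ℝ | p.2 ≤ p.1} :=
  measurableSet_le measurable_snd measurable_fst

lemma convA {α : ℝ} (hα : 0 < α) (hα1 : α < 1) {b : ℝ} (hb : 0 < b) (u : ℝ → ℂ)
    (hu : IntegrableOn u (Ioc 0 b)) :
    Integrable (fun p : ℝ × ℝ => if p.2 ≤ p.1 then u p.2 * (((p.1 - p.2) ^ (-α) : ℝ) : ℂ) else 0)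
      ((volume.restrict (Ioc 0 b)).prod (volume.restrict (Ioc 0 b))) := by
  set μb := volume.restrict (Ioc (0:ℝ) b) with hμb
  have hK : Measurable fun p : ℝ × ℝ => (((p.1 - p.2) ^ (-α) : ℝ) : ℂ) := by fun_prop
  have hprod : AEStronglyMeasurable
      (fun p : ℝ × ℝ => u p.2 * (((p.1 - p.2) ^ (-α) : ℝ) : ℂ)) (μb.prod μb) := by
    exact (AEStronglyMeasurable.comp_snd hu.aestronglyMeasurable).mul hK.aestronglyMeasurable
  have hmeas : AEStronglyMeasurable
      (fun p : ℝ × ℝ => if p.2 ≤ p.1 then u p.2 * (((p.1 - p.2) ^ (-α) : ℝ) : ℂ) else 0)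
      (μb.prod μb) := by
    rw [ite_eq_indicator_triangle]
    exact hprod.indicator measurableSet_triangle
  rw [integrable_prod_iff' hmeas]
  constructor
  · filter_upwards [ae_restrict_mem measurableSet_Ioc] with t ht
    have hind : (fun x => if t ≤ x then u t * (((x - t) ^ (-α) : ℝ) : ℂ) else 0)
        = Set.indicator (Ici t) (fun x => u t * (((x - t) ^ (-α) : ℝ) : ℂ)) := by
      ext x; simp [Set.indicator_apply, mem_Ici]
    show Integrable (fun x => if t ≤ x then u t * (((x - t) ^ (-α) : ℝ) : ℂ) else 0) μb
    rw [hind, hμb, integrable_indicator_iff measurableSet_Ici]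
    rw [IntegrableOn, Measure.restrict_restrict measurableSet_Ici]
    have hsub : Ici t ∩ Ioc 0 b ⊆ Icc t b := fun x hx => ⟨hx.1, hx.2.2⟩
    refine Integrable.mono_measure ?_ (Measure.restrict_mono hsub le_rfl)
    have : IntegrableOn (fun x => (((x - t) ^ (-α) : ℝ) : ℂ)) (Icc t b) volume := by
      rw [← intervalIntegrable_iff_integrableOn_Icc_of_le ht.2]
      exact ker_intervalIntegrableC hα1 t t b
    exact this.const_mul _
  · have hCb : (0:ℝ) ≤ b ^ (1 - α) / (1 - α) := div_nonneg (Real.rpow_nonneg hb.le _) (by linarith)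
    refine Integrable.mono' (g := fun t => ‖u t‖ * (b ^ (1 - α) / (1 - α)))
      (hu.norm.mul_const _) ?_ ?_
    · exact hmeas.norm.prod_swap.integral_prod_right'
    · filter_upwards [ae_restrict_mem measurableSet_Ioc] with t ht
      rw [Real.norm_of_nonneg (integral_nonneg (fun x => norm_nonneg _))]
      have heq : (fun x => ‖if t ≤ x then u t * (((x - t) ^ (-α) : ℝ) : ℂ) else 0‖)
          = Set.indicator (Ici t) (fun x => ‖u t‖ * ((x - t) ^ (-α) : ℝ)) := by
        ext x
        by_cases h : t ≤ x
        · simp only [h, if_true, Set.indicator_of_mem (mem_Ici.2 h), norm_mul,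
            Complex.norm_real, Real.norm_eq_abs]
          rw [abs_of_nonneg (Real.rpow_nonneg (by linarith) _)]
        · simp [h, Set.indicator_of_notMem (fun hx => h (mem_Ici.1 hx))]
      rw [heq, hμb, integral_indicator measurableSet_Ici,
        Measure.restrict_restrict measurableSet_Ici]
      have hseteq : Ici t ∩ Ioc 0 b = Icc t b := by
        ext x; simp only [mem_inter_iff, mem_Ici, mem_Ioc, mem_Icc]
        exact ⟨fun ⟨h1, _, h3⟩ => ⟨h1, h3⟩, fun ⟨h1, h2⟩ => ⟨h1, lt_of_lt_of_le ht.1 h1, h2⟩⟩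
      rw [hseteq, integral_Icc_eq_integral_Ioc,
        ← intervalIntegral.integral_of_le ht.2, intervalIntegral.integral_const_mul,
        ker_integral hα1 ht.2]
      have h1 : (b - t) ^ (1 - α) / (1 - α) ≤ b ^ (1 - α) / (1 - α) := by
        apply div_le_div_of_nonneg_right ?_ (by linarith)
        · exact Real.rpow_le_rpow (by linarith [ht.2]) (by linarith [ht.1]) (by linarith)
      exact mul_le_mul_of_nonneg_left h1 (norm_nonneg _)

lemma ker_intervalIntegrable_left {α : ℝ} (hα1 : α < 1) (x a b : ℝ) :
    IntervalIntegrable (fun t => ((x - t) ^ (-α) : ℝ)) volume a b := by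
  have h := (intervalIntegral.intervalIntegrable_rpow' (a := x - a) (b := x - b)
    (r := -α) (by linarith)).comp_sub_left x
  simpa using h

lemma ker_integral_left {α : ℝ} (hα1 : α < 1) {x : ℝ} (hx : 0 ≤ x) :
    (∫ t in (0:ℝ)..x, ((x - t) ^ (-α) : ℝ)) = x ^ (1 - α) / (1 - α) := by
  have h1 : (∫ t in (0:ℝ)..x, ((x - t) ^ (-α) : ℝ))
      = ∫ u in (x - x)..(x - 0), (u ^ (-α) : ℝ) :=
    intervalIntegral.integral_comp_sub_left (fun u => (u ^ (-α) : ℝ)) x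
  rw [h1, sub_self, sub_zero, integral_rpow (Or.inl (by linarith)),
    Real.zero_rpow (by intro h; linarith)]
  ring_nf

lemma convB {α : ℝ} (hα : 0 < α) (hα1 : α < 1) {b C : ℝ} (hb : 0 < b) (v u : ℝ → ℂ)
    (hv : IntegrableOn v (Ioc 0 b)) (hu : AEStronglyMeasurable u (volume.restrict (Ioc 0 b)))
    (huC : ∀ t ∈ Ioc (0:ℝ) b, ‖u t‖ ≤ C) :
    Integrable (fun p : ℝ × ℝ =>
        if p.2 ≤ p.1 then v p.1 * u p.2 * (((p.1 - p.2) ^ (-α) : ℝ) : ℂ) else 0)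
      ((volume.restrict (Ioc 0 b)).prod (volume.restrict (Ioc 0 b))) := by
  set μb := volume.restrict (Ioc (0:ℝ) b) with hμb
  have hC : 0 ≤ C := le_trans (norm_nonneg _) (huC b ⟨hb, le_rfl⟩)
  have hK : Measurable fun p : ℝ × ℝ => (((p.1 - p.2) ^ (-α) : ℝ) : ℂ) := by fun_prop
  have hprod : AEStronglyMeasurable
      (fun p : ℝ × ℝ => v p.1 * u p.2 * (((p.1 - p.2) ^ (-α) : ℝ) : ℂ)) (μb.prod μb) :=
    ((AEStronglyMeasurable.comp_fst hv.aestronglyMeasurable).mul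
      (AEStronglyMeasurable.comp_snd hu)).mul hK.aestronglyMeasurable
  have hmeas : AEStronglyMeasurable
      (fun p : ℝ × ℝ =>
        if p.2 ≤ p.1 then v p.1 * u p.2 * (((p.1 - p.2) ^ (-α) : ℝ) : ℂ) else 0)
      (μb.prod μb) := by
    rw [ite_eq_indicator_triangle]
    exact hprod.indicator measurableSet_triangle
  -- the dominating indicator function, for fixed x
  have hGint : ∀ x ∈ Ioc (0:ℝ) b,
      Integrable (Set.indicator (Iic x) (fun t => ‖v x‖ * C * ((x - t) ^ (-α) : ℝ))) μb := by
    intro x hx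
    rw [hμb, integrable_indicator_iff measurableSet_Iic, IntegrableOn,
      Measure.restrict_restrict measurableSet_Iic]
    have hsub : Iic x ∩ Ioc 0 b ⊆ Ioc 0 x := fun t ht => ⟨ht.2.1, ht.1⟩
    refine Integrable.mono_measure ?_ (Measure.restrict_mono hsub le_rfl)
    have : IntegrableOn (fun t => ((x - t) ^ (-α) : ℝ)) (Ioc 0 x) volume := by
      rw [← intervalIntegrable_iff_integrableOn_Ioc_of_le hx.1.le]
      exact ker_intervalIntegrable_left hα1 x 0 x
    exact this.const_mul _
  have hbnd : ∀ x ∈ Ioc (0:ℝ) b, ∀ t ∈ Ioc (0:ℝ) b,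
      ‖if t ≤ x then v x * u t * (((x - t) ^ (-α) : ℝ) : ℂ) else 0‖
        ≤ Set.indicator (Iic x) (fun t => ‖v x‖ * C * ((x - t) ^ (-α) : ℝ)) t := by
    intro x _ t ht'
    by_cases h : t ≤ x
    · simp only [h, if_true, Set.indicator_of_mem (mem_Iic.2 h), norm_mul]
      rw [Complex.norm_real, Real.norm_eq_abs,
        abs_of_nonneg (Real.rpow_nonneg (by linarith) _)]
      refine mul_le_mul_of_nonneg_right ?_ (Real.rpow_nonneg (by linarith) _)
      exact mul_le_mul_of_nonneg_left (huC t ht') (norm_nonneg _)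
    · simp [h, Set.indicator_of_notMem (fun hx' => h (mem_Iic.1 hx'))]
  have hsec : ∀ x ∈ Ioc (0:ℝ) b,
      Integrable (fun t => if t ≤ x then v x * u t * (((x - t) ^ (-α) : ℝ) : ℂ) else 0) μb := by
    intro x hx
    refine Integrable.mono' (hGint x hx) ?_ ?_
    · have h1 : AEStronglyMeasurable (fun t => v x * u t * (((x - t) ^ (-α) : ℝ) : ℂ)) μb := by
        have hk : Measurable (fun t : ℝ => (((x - t) ^ (-α) : ℝ) : ℂ)) := by fun_prop
        exact (aestronglyMeasurable_const.mul hu).mul hk.aestronglyMeasurable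
      have h2 : (fun t => if t ≤ x then v x * u t * (((x - t) ^ (-α) : ℝ) : ℂ) else 0)
          = Set.indicator (Iic x) (fun t => v x * u t * (((x - t) ^ (-α) : ℝ) : ℂ)) := by
        ext t; simp [Set.indicator_apply, mem_Iic]
      rw [h2]
      exact h1.indicator measurableSet_Iic
    · filter_upwards [ae_restrict_mem measurableSet_Ioc] with t ht
      exact hbnd x hx t ht
  rw [integrable_prod_iff hmeas]
  refine ⟨?_, ?_⟩
  · filter_upwards [ae_restrict_mem measurableSet_Ioc] with x hx
    exact hsec x hx
  · have hCb : (0:ℝ) ≤ b ^ (1 - α) / (1 - α) := div_nonneg (Real.rpow_nonneg hb.le _) (by linarith)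
    refine Integrable.mono' (g := fun x => ‖v x‖ * (C * (b ^ (1 - α) / (1 - α))))
      (hv.norm.mul_const _) ?_ ?_
    · exact hmeas.norm.integral_prod_right'
    · filter_upwards [ae_restrict_mem measurableSet_Ioc] with x hx
      rw [Real.norm_of_nonneg (integral_nonneg (fun t => norm_nonneg _))]
      have step1 : (∫ t, ‖if t ≤ x then v x * u t * (((x - t) ^ (-α) : ℝ) : ℂ) else 0‖ ∂μb)
          ≤ ∫ t, Set.indicator (Iic x) (fun t => ‖v x‖ * C * ((x - t) ^ (-α) : ℝ)) t ∂μb := by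
        refine integral_mono_ae ((hsec x hx).norm) (hGint x hx) ?_
        filter_upwards [ae_restrict_mem measurableSet_Ioc] with t ht
        exact hbnd x hx t ht
      refine step1.trans ?_
      rw [hμb, integral_indicator measurableSet_Iic,
        Measure.restrict_restrict measurableSet_Iic]
      have hseteq : Iic x ∩ Ioc 0 b = Ioc 0 x := by
        ext t; simp only [mem_inter_iff, mem_Iic, mem_Ioc]
        exact ⟨fun ⟨h1, h2, _⟩ => ⟨h2, h1⟩, fun ⟨h1, h2⟩ => ⟨h2, h1, h2.trans hx.2⟩⟩
      rw [hseteq, ← intervalIntegral.integral_of_le hx.1.le,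
        intervalIntegral.integral_const_mul, ker_integral_left hα1 hx.1.le]
      rw [mul_assoc]
      refine mul_le_mul_of_nonneg_left ?_ (norm_nonneg _)
      refine mul_le_mul_of_nonneg_left ?_ hC
      exact div_le_div_of_nonneg_right
        (Real.rpow_le_rpow hx.1.le hx.2 (by linarith)) (by linarith)

lemma convC {b : ℝ} (v u : ℝ → ℂ) (hv : IntegrableOn v (Ioc 0 b)) (hu : IntegrableOn u (Ioc 0 b)) :
    Integrable (fun p : ℝ × ℝ => if p.2 ≤ p.1 then v p.1 * u p.2 else 0)
      ((volume.restrict (Ioc 0 b)).prod (volume.restrict (Ioc 0 b))) := by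
  rw [ite_eq_indicator_triangle]
  exact (Integrable.mul_prod hv hu).indicator measurableSet_triangle

lemma conv_L1 {α : ℝ} (hα : 0 < α) (hα1 : α < 1) {b : ℝ} (hb : 0 < b) (u : ℝ → ℂ)
    (hu : IntegrableOn u (Ioc 0 b)) :
    IntegrableOn (fun x => ∫ t in (0:ℝ)..x, u t * (((x - t) ^ (-α) : ℝ) : ℂ)) (Ioc 0 b) := by
  have h := (convA hα hα1 hb u hu).integral_prod_left
  refine h.congr ?_
  filter_upwards [ae_restrict_mem measurableSet_Ioc] with x hx
  have h1 : (fun t => if t ≤ x then u t * (((x - t) ^ (-α) : ℝ) : ℂ) else 0)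
      = Set.indicator (Iic x) (fun t => u t * (((x - t) ^ (-α) : ℝ) : ℂ)) := by
    ext t; simp [Set.indicator_apply, mem_Iic]
  show (∫ t, (if t ≤ x then u t * (((x - t) ^ (-α) : ℝ) : ℂ) else 0)
      ∂(volume.restrict (Ioc 0 b))) = _
  rw [h1, integral_indicator measurableSet_Iic, Measure.restrict_restrict measurableSet_Iic]
  have hseteq : Iic x ∩ Ioc 0 b = Ioc 0 x := by
    ext t; simp only [mem_inter_iff, mem_Iic, mem_Ioc]
    exact ⟨fun ⟨h1', h2, _⟩ => ⟨h2, h1'⟩, fun ⟨h1', h2⟩ => ⟨h2, h1', h2.trans hx.2⟩⟩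
  rw [hseteq, ← intervalIntegral.integral_of_le hx.1.le]

lemma ker_intervalIntegrable_leftC {α : ℝ} (hα1 : α < 1) (x a b : ℝ) :
    IntervalIntegrable (fun t => (((x - t) ^ (-α) : ℝ) : ℂ)) volume a b := by
  have h := ker_intervalIntegrable_left hα1 x a b
  rw [intervalIntegrable_iff] at h ⊢
  exact h.ofReal

lemma ker_integral_left' {α : ℝ} (hα1 : α < 1) {s x : ℝ} (h : s ≤ x) :
    (∫ t in s..x, ((x - t) ^ (-α) : ℝ)) = (x - s) ^ (1 - α) / (1 - α) := by
  have h1 : (∫ t in s..x, ((x - t) ^ (-α) : ℝ))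
      = ∫ u in (x - x)..(x - s), (u ^ (-α) : ℝ) :=
    intervalIntegral.integral_comp_sub_left (fun u => (u ^ (-α) : ℝ)) x
  rw [h1, sub_self, integral_rpow (Or.inl (by linarith)),
    Real.zero_rpow (by intro hh; linarith)]
  ring_nf

lemma ker_integral_leftC {α : ℝ} (hα1 : α < 1) {s x : ℝ} (h : s ≤ x) :
    (∫ t in s..x, (((x - t) ^ (-α) : ℝ) : ℂ)) = (((x - s) ^ (1 - α) / (1 - α) : ℝ) : ℂ) := by
  rw [intervalIntegral.integral_ofReal, ker_integral_left' hα1 h]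

/-- Integration by parts for the left fractional derivative: for `0 < α < 1`, `l > 0`,
and `φ, ψ` complex-valued absolutely continuous on `[0,l]` (with derivatives `φ', ψ'`),
`∫_0^l (D_{0+}^α φ) ψ = ψ(l)(I_{0+}^{1-α}φ)(l) - (1/Γ(1-α)) ∫_0^l φ(t) (∫_t^l ψ'(x)(x-t)^{-α} dx) dt`. -/
theorem left_fracDeriv_integration_by_parts
    (α l : ℝ) (hα : 0 < α) (hα1 : α < 1) (hl : 0 < l)
    (φ φ' ψ ψ' : ℝ → ℂ)
    (hφ : ACDerivOn 0 l φ φ') (hψ : ACDerivOn 0 l ψ ψ') :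
    ∫ x in (0:ℝ)..l, RLDplus α 0 φ x * ψ x
      = ψ l * RLIplus (1 - α) 0 φ l
        - ((1 / Real.Gamma (1 - α) : ℝ) : ℂ) *
            ∫ t in (0:ℝ)..l, φ t * ∫ x in t..l, ψ' x * (((x - t) ^ (-α) : ℝ) : ℂ) := by
  have hα' : (0:ℝ) < 1 - α := by linarith
  set c : ℂ := ((1 / Real.Gamma (1 - α) : ℝ) : ℂ) with hc
  set F : ℝ → ℂ := RLIplus (1 - α) 0 φ with hF
  have hFdef : ∀ x, F x = c * ∫ t in (0:ℝ)..x, φ t * (((x - t) ^ (-α) : ℝ) : ℂ) := by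
    intro x
    rw [hF, RLIplus]
    have he : (1 - α - 1 : ℝ) = -α := by ring
    rw [he]
  -- basic integrability facts
  have hφ'i : IntegrableOn φ' (Ioc 0 l) :=
    (intervalIntegrable_iff_integrableOn_Ioc_of_le hl.le).1 hφ.1
  have hψ'i : IntegrableOn ψ' (Ioc 0 l) :=
    (intervalIntegrable_iff_integrableOn_Ioc_of_le hl.le).1 hψ.1
  have hprim : ContinuousOn (fun x => ∫ t in (0:ℝ)..x, φ' t) (Icc 0 l) := by
    have h := intervalIntegral.continuousOn_primitive_interval (a := 0) (b := l) (μ := volume) (f := φ')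
      (by rw [uIcc_of_le hl.le]
          exact (intervalIntegrable_iff_integrableOn_Icc_of_le hl.le).1 hφ.1)
    rwa [uIcc_of_le hl.le] at h
  have φcont : ContinuousOn φ (Icc 0 l) :=
    (continuousOn_const.add hprim).congr (fun x hx => hφ.2 x hx)
  have hprimψ : ContinuousOn (fun x => ∫ t in (0:ℝ)..x, ψ' t) (Icc 0 l) := by
    have h := intervalIntegral.continuousOn_primitive_interval (a := 0) (b := l) (μ := volume) (f := ψ')
      (by rw [uIcc_of_le hl.le]
          exact (intervalIntegrable_iff_integrableOn_Icc_of_le hl.le).1 hψ.1)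
    rwa [uIcc_of_le hl.le] at h
  have ψcont : ContinuousOn ψ (Icc 0 l) :=
    (continuousOn_const.add hprimψ).congr (fun x hx => hψ.2 x hx)
  obtain ⟨Cφ, hCφ⟩ := isCompact_Icc.exists_bound_of_continuousOn φcont
  have φint : IntegrableOn φ (Ioc 0 l) :=
    (φcont.integrableOn_Icc).mono_set Ioc_subset_Icc_self
  have φmeas : AEStronglyMeasurable φ (volume.restrict (Ioc 0 l)) := φint.aestronglyMeasurable
  -- the a.e. derivative of F
  set g : ℝ → ℂ := fun x => c * (φ 0 * ((x ^ (-α) : ℝ) : ℂ)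
    + ∫ t in (0:ℝ)..x, φ' t * (((x - t) ^ (-α) : ℝ) : ℂ)) with hgdef
  have part1 : IntegrableOn (fun x => ((x ^ (-α) : ℝ) : ℂ)) (Ioc 0 l) := by
    have h := ker_intervalIntegrableC hα1 0 0 l
    simp only [sub_zero] at h
    exact (intervalIntegrable_iff_integrableOn_Ioc_of_le hl.le).1 h
  have part2 : IntegrableOn (fun x => ∫ t in (0:ℝ)..x, φ' t * (((x - t) ^ (-α) : ℝ) : ℂ))
      (Ioc 0 l) := conv_L1 hα hα1 hl φ' hφ'i
  have gint : IntegrableOn g (Ioc 0 l) := (((part1.const_mul (φ 0)).add part2).const_mul c)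
  have gII : IntervalIntegrable g volume 0 l :=
    (intervalIntegrable_iff_integrableOn_Ioc_of_le hl.le).2 gint
  -- Step 2 : F is the primitive of g on [0, l]
  have key : ∀ x ∈ Icc (0:ℝ) l, F x = ∫ t in (0:ℝ)..x, g t := by
    intro x hx
    rcases eq_or_lt_of_le hx.1 with h0 | hx0
    · rw [← h0, hFdef]
      simp
    have hxl : x ≤ l := hx.2
    have hφ'x : IntegrableOn φ' (Ioc 0 x) := hφ'i.mono_set (Ioc_subset_Ioc le_rfl hxl)
    have ki : IntervalIntegrable (fun t => (((x - t) ^ (-α) : ℝ) : ℂ)) volume 0 x :=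
      ker_intervalIntegrable_leftC hα1 x 0 x
    have L1 : F x = c * ∫ t in (0:ℝ)..x,
        (φ 0 + ∫ s in (0:ℝ)..t, φ' s) * (((x - t) ^ (-α) : ℝ) : ℂ) := by
      rw [hFdef]
      congr 1
      apply intervalIntegral.integral_congr
      intro t ht
      rw [uIcc_of_le hx0.le] at ht
      dsimp only
      rw [hφ.2 t ⟨ht.1, ht.2.trans hxl⟩]
    have i1 : IntervalIntegrable (fun t => φ 0 * (((x - t) ^ (-α) : ℝ) : ℂ)) volume 0 x :=
      ki.const_mul _
    have i2 : IntervalIntegrable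
        (fun t => (∫ s in (0:ℝ)..t, φ' s) * (((x - t) ^ (-α) : ℝ) : ℂ)) volume 0 x := by
      rw [intervalIntegrable_iff_integrableOn_Ioc_of_le hx0.le]
      refine IntegrableOn.mono_set ?_ Ioc_subset_Icc_self
      refine IntegrableOn.continuousOn_mul ?_ ?_ isCompact_Icc
      · exact hprim.mono (Icc_subset_Icc le_rfl hxl)
      · exact (intervalIntegrable_iff_integrableOn_Icc_of_le hx0.le).1 ki
    have L2 : F x = c * ((∫ t in (0:ℝ)..x, φ 0 * (((x - t) ^ (-α) : ℝ) : ℂ))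
        + ∫ t in (0:ℝ)..x, (∫ s in (0:ℝ)..t, φ' s) * (((x - t) ^ (-α) : ℝ) : ℂ)) := by
      rw [L1, ← intervalIntegral.integral_add i1 i2]
      congr 1
      apply intervalIntegral.integral_congr
      intro t _
      ring
    have L3 : (∫ t in (0:ℝ)..x, φ 0 * (((x - t) ^ (-α) : ℝ) : ℂ))
        = φ 0 * ((x ^ (1 - α) / (1 - α) : ℝ) : ℂ) := by
      rw [intervalIntegral.integral_const_mul, ker_integral_leftC hα1 hx0.le]
      norm_num
    have L4 : (∫ t in (0:ℝ)..x, (∫ s in (0:ℝ)..t, φ' s) * (((x - t) ^ (-α) : ℝ) : ℂ))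
        = ∫ s in (0:ℝ)..x, φ' s * (((x - s) ^ (1 - α) / (1 - α) : ℝ) : ℂ) := by
      have e1 : (∫ t in (0:ℝ)..x, (∫ s in (0:ℝ)..t, φ' s) * (((x - t) ^ (-α) : ℝ) : ℂ))
          = ∫ t in (0:ℝ)..x, ∫ s in (0:ℝ)..t, φ' s * (((x - t) ^ (-α) : ℝ) : ℂ) := by
        apply intervalIntegral.integral_congr
        intro t _
        dsimp only
        rw [intervalIntegral.integral_mul_const]
      have hv : IntegrableOn (fun t => (((x - t) ^ (-α) : ℝ) : ℂ)) (Ioc 0 x) :=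
        (intervalIntegrable_iff_integrableOn_Ioc_of_le hx0.le).1 ki
      have hint : Integrable (fun p : ℝ × ℝ =>
          if p.2 ≤ p.1 then φ' p.2 * (((x - p.1) ^ (-α) : ℝ) : ℂ) else 0)
          ((volume.restrict (Ioc 0 x)).prod (volume.restrict (Ioc 0 x))) := by
        refine (convC _ _ hv hφ'x).congr (Eventually.of_forall fun p => ?_)
        by_cases h : p.2 ≤ p.1
        · simp only [h, if_true]; ring
        · simp only [h, if_false]
      rw [e1, integral_triangle_swap hx0.le
        (fun t s => φ' s * (((x - t) ^ (-α) : ℝ) : ℂ)) hint]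
      apply intervalIntegral.integral_congr
      intro s hs
      rw [uIcc_of_le hx0.le] at hs
      dsimp only
      rw [intervalIntegral.integral_const_mul, ker_integral_leftC hα1 hs.2]
    have R1 : (∫ t in (0:ℝ)..x, g t)
        = c * ((φ 0 * ((x ^ (1 - α) / (1 - α) : ℝ) : ℂ))
          + ∫ s in (0:ℝ)..x, φ' s * (((x - s) ^ (1 - α) / (1 - α) : ℝ) : ℂ)) := by
      have iA : IntervalIntegrable (fun t => φ 0 * ((t ^ (-α) : ℝ) : ℂ)) volume 0 x :=
        (((intervalIntegrable_iff_integrableOn_Ioc_of_le hx0.le).2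
          (part1.mono_set (Ioc_subset_Ioc le_rfl hxl))).const_mul _)
      have iB : IntervalIntegrable
          (fun t => ∫ s in (0:ℝ)..t, φ' s * (((t - s) ^ (-α) : ℝ) : ℂ)) volume 0 x :=
        (intervalIntegrable_iff_integrableOn_Ioc_of_le hx0.le).2
          (part2.mono_set (Ioc_subset_Ioc le_rfl hxl))
      have e0 : (∫ t in (0:ℝ)..x, g t) = c * ((∫ t in (0:ℝ)..x, φ 0 * ((t ^ (-α) : ℝ) : ℂ))
          + ∫ t in (0:ℝ)..x, ∫ s in (0:ℝ)..t, φ' s * (((t - s) ^ (-α) : ℝ) : ℂ)) := by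
        rw [hgdef]
        rw [intervalIntegral.integral_const_mul, intervalIntegral.integral_add iA iB]
      rw [e0]
      congr 1
      have eA : (∫ t in (0:ℝ)..x, φ 0 * ((t ^ (-α) : ℝ) : ℂ))
          = φ 0 * ((x ^ (1 - α) / (1 - α) : ℝ) : ℂ) := by
        rw [intervalIntegral.integral_const_mul]
        have h := ker_integralC hα1 (t := 0) (b := x) hx0.le
        simp only [sub_zero] at h
        rw [h]
      have eB : (∫ t in (0:ℝ)..x, ∫ s in (0:ℝ)..t, φ' s * (((t - s) ^ (-α) : ℝ) : ℂ))
          = ∫ s in (0:ℝ)..x, φ' s * (((x - s) ^ (1 - α) / (1 - α) : ℝ) : ℂ) := by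
        rw [integral_triangle_swap hx0.le
          (fun t s => φ' s * (((t - s) ^ (-α) : ℝ) : ℂ)) (convA hα hα1 hx0 φ' hφ'x)]
        apply intervalIntegral.integral_congr
        intro s hs
        rw [uIcc_of_le hx0.le] at hs
        dsimp only
        rw [intervalIntegral.integral_const_mul, ker_integralC hα1 hs.2]
      rw [eA, eB]
    rw [L2, L3, L4, R1]
  -- Step 3 : ∫ (deriv F) ψ = ∫ g ψ
  have S3 : (∫ x in (0:ℝ)..l, RLDplus α 0 φ x * ψ x) = ∫ x in (0:ℝ)..l, g x * ψ x := by
    set gt : ℝ → ℂ := Set.indicator (Ioc 0 l) g with hgt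
    have hgti : Integrable gt volume := (integrable_indicator_iff measurableSet_Ioc).2 gint
    have hFgt : ∀ x ∈ Icc (0:ℝ) l, F x = ∫ t in (0:ℝ)..x, gt t := by
      intro x hx
      rw [key x hx, intervalIntegral.integral_of_le hx.1, intervalIntegral.integral_of_le hx.1,
        hgt, setIntegral_indicator measurableSet_Ioc]
      have heq : Ioc 0 x ∩ Ioc 0 l = Ioc 0 x := inter_eq_left.2 (Ioc_subset_Ioc le_rfl hx.2)
      rw [heq]
    have hD := ae_hasDerivAt_intervalIntegral gt hgti
    have hder : ∀ᵐ x : ℝ, x ∈ Ioo (0:ℝ) l → deriv F x = g x := by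
      filter_upwards [hD] with x hx hmem
      have hnb : Ioo (0:ℝ) l ∈ 𝓝 x := isOpen_Ioo.mem_nhds hmem
      have heq : F =ᶠ[𝓝 x] (fun y => ∫ t in (0:ℝ)..y, gt t) :=
        eventually_of_mem hnb (fun y hy => hFgt y (Ioo_subset_Icc_self hy))
      rw [heq.deriv_eq, hx.deriv, hgt,
        Set.indicator_of_mem (Ioo_subset_Ioc_self hmem) g]
    have hne : ∀ᵐ x : ℝ, x ≠ l := by
      rw [ae_iff]
      have : {x : ℝ | ¬x ≠ l} = {l} := by ext y; simp
      rw [this]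
      exact measure_singleton l
    apply intervalIntegral.integral_congr_ae
    rw [uIoc_of_le hl.le]
    filter_upwards [hder, hne] with x hx1 hx2 hmem
    have hx' : x ∈ Ioo (0:ℝ) l := ⟨hmem.1, lt_of_le_of_ne hmem.2 hx2⟩
    show RLDplus α 0 φ x * ψ x = g x * ψ x
    rw [RLDplus, ← hF, hx1 hx']
  -- Step 4i : ∫ ψ' F in terms of the double integral
  have S4i : (∫ x in (0:ℝ)..l, ψ' x * F x)
      = c * ∫ t in (0:ℝ)..l, φ t * ∫ x in t..l, ψ' x * (((x - t) ^ (-α) : ℝ) : ℂ) := by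
    have hint : Integrable (fun p : ℝ × ℝ =>
        if p.2 ≤ p.1 then ψ' p.1 * φ p.2 * (((p.1 - p.2) ^ (-α) : ℝ) : ℂ) else 0)
        ((volume.restrict (Ioc 0 l)).prod (volume.restrict (Ioc 0 l))) :=
      convB hα hα1 hl ψ' φ hψ'i φmeas (fun t ht => hCφ t (Ioc_subset_Icc_self ht))
    have hsw := integral_triangle_swap hl.le
      (fun x t => ψ' x * φ t * (((x - t) ^ (-α) : ℝ) : ℂ)) hint
    have e1 : (∫ x in (0:ℝ)..l, ∫ t in (0:ℝ)..x, ψ' x * φ t * (((x - t) ^ (-α) : ℝ) : ℂ))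
        = ∫ x in (0:ℝ)..l, ψ' x * ∫ t in (0:ℝ)..x, φ t * (((x - t) ^ (-α) : ℝ) : ℂ) := by
      apply intervalIntegral.integral_congr
      intro x _
      dsimp only
      rw [← intervalIntegral.integral_const_mul]
      apply intervalIntegral.integral_congr
      intro t _
      dsimp only
      ring
    have e2 : (∫ t in (0:ℝ)..l, ∫ x in t..l, ψ' x * φ t * (((x - t) ^ (-α) : ℝ) : ℂ))
        = ∫ t in (0:ℝ)..l, φ t * ∫ x in t..l, ψ' x * (((x - t) ^ (-α) : ℝ) : ℂ) := by
      apply intervalIntegral.integral_congr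
      intro t _
      dsimp only
      rw [← intervalIntegral.integral_const_mul]
      apply intervalIntegral.integral_congr
      intro x _
      dsimp only
      ring
    have e3 : (∫ x in (0:ℝ)..l, ψ' x * F x)
        = c * ∫ x in (0:ℝ)..l, ψ' x * ∫ t in (0:ℝ)..x, φ t * (((x - t) ^ (-α) : ℝ) : ℂ) := by
      rw [← intervalIntegral.integral_const_mul]
      apply intervalIntegral.integral_congr
      intro x _
      dsimp only
      rw [hFdef x]
      ring
    rw [e3, ← e1, hsw, e2]
  -- Step 4ii : integration by parts for the primitives
  have S4ii : (∫ x in (0:ℝ)..l, ψ' x * F x) = ψ l * F l - ∫ t in (0:ℝ)..l, g t * ψ t := by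
    have e1 : (∫ x in (0:ℝ)..l, ψ' x * F x)
        = ∫ x in (0:ℝ)..l, ∫ t in (0:ℝ)..x, ψ' x * g t := by
      apply intervalIntegral.integral_congr
      intro x hx
      rw [uIcc_of_le hl.le] at hx
      dsimp only
      rw [key x hx, ← intervalIntegral.integral_const_mul]
    have hint : Integrable (fun p : ℝ × ℝ => if p.2 ≤ p.1 then ψ' p.1 * g p.2 else 0)
        ((volume.restrict (Ioc 0 l)).prod (volume.restrict (Ioc 0 l))) := convC _ _ hψ'i gint
    rw [e1, integral_triangle_swap hl.le (fun x t => ψ' x * g t) hint]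
    have e2 : (∫ t in (0:ℝ)..l, ∫ x in t..l, ψ' x * g t)
        = ∫ t in (0:ℝ)..l, g t * (ψ l - ψ t) := by
      apply intervalIntegral.integral_congr
      intro t ht
      rw [uIcc_of_le hl.le] at ht
      dsimp only
      rw [intervalIntegral.integral_mul_const]
      have hadj : (∫ x in (0:ℝ)..t, ψ' x) + (∫ x in t..l, ψ' x) = ∫ x in (0:ℝ)..l, ψ' x :=
        intervalIntegral.integral_add_adjacent_intervals
          (hψ.1.mono_set (uIcc_subset_uIcc left_mem_uIcc
            (by rw [uIcc_of_le hl.le]; exact ht)))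
          (hψ.1.mono_set (uIcc_subset_uIcc
            (by rw [uIcc_of_le hl.le]; exact ht) right_mem_uIcc))
      have hadj2 : (∫ x in t..l, ψ' x) = ψ l - ψ t := by
        have h1 := hψ.2 l (right_mem_Icc.2 hl.le)
        have h2 := hψ.2 t ht
        rw [h1, h2, ← hadj]
        ring
      rw [hadj2]
      ring
    rw [e2]
    have igψ : IntervalIntegrable (fun t => g t * ψ t) volume 0 l := by
      rw [intervalIntegrable_iff_integrableOn_Ioc_of_le hl.le]
      refine IntegrableOn.mono_set ?_ Ioc_subset_Icc_self
      exact IntegrableOn.mul_continuousOn ((integrableOn_Icc_iff_integrableOn_Ioc).2 gint)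
        ψcont isCompact_Icc
    have igl : IntervalIntegrable (fun t => g t * ψ l) volume 0 l := gII.mul_const _
    have e3 : (∫ t in (0:ℝ)..l, g t * (ψ l - ψ t))
        = (∫ t in (0:ℝ)..l, g t * ψ l) - ∫ t in (0:ℝ)..l, g t * ψ t := by
      rw [← intervalIntegral.integral_sub igl igψ]
      apply intervalIntegral.integral_congr
      intro t _
      dsimp only
      ring
    rw [e3, intervalIntegral.integral_mul_const, key l (right_mem_Icc.2 hl.le)]
    ring
  rw [S3]
  have : (∫ x in (0:ℝ)..l, g x * ψ x) = ψ l * F l - ∫ x in (0:ℝ)..l, ψ' x * F x := by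
    rw [S4ii]; ring
  rw [this, S4i, hF]
end

section
/- Reduction of the two-sided fractional eigenvalue equation to a Volterra integral equation: let 0 < α < 1, l > 0, k ∈ ℝ. Let φ be integrable on (0,l) such that F := I_{0+}^{1−α} φ is absolutely continuous on [δ,l] for every δ ∈ (0,l), the limit b := lim_{x→0+} F(x) exists, D_{l−}^α φ exists almost everywhere and is integrable on (0,l), and the equation (D_{0+}^α φ)(x) + (D_{l−}^α φ)(x) = k φ(x) holds for almost every x ∈ (0,l). Then for almost every x ∈ (0,l): φ(x) = (b/Γ(α)) x^{α−1} − (1/Γ(α)) ∫_0^x ( −k φ(s) + (D_{l−}^α φ)(s) )·(x−s)^{α−1} ds. -/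
open MeasureTheory Set Filter Topology intervalIntegral

section Helpers

lemma real_beta {a b : ℝ} (ha : 0 < a) (hb : 0 < b) :
    ∫ v in (0:ℝ)..1, v ^ (a - 1) * (1 - v) ^ (b - 1)
      = Real.Gamma a * Real.Gamma b / Real.Gamma (a + b) := by
  have hcb : Complex.betaIntegral a b
      = ((∫ v in (0:ℝ)..1, v ^ (a - 1) * (1 - v) ^ (b - 1) : ℝ) : ℂ) := by
    rw [Complex.betaIntegral, ← intervalIntegral.integral_ofReal]
    apply intervalIntegral.integral_congr
    intro x hx
    rw [Set.uIcc_of_le (by norm_num : (0:ℝ) ≤ 1)] at hx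
    obtain ⟨hx0, hx1⟩ := hx
    show (x:ℂ) ^ ((a:ℂ) - 1) * (1 - (x:ℂ)) ^ ((b:ℂ) - 1)
        = ((x ^ (a - 1) * (1 - x) ^ (b - 1) : ℝ) : ℂ)
    rw [show ((x ^ (a - 1) * (1 - x) ^ (b - 1) : ℝ) : ℂ)
        = ((x ^ (a-1) : ℝ) : ℂ) * (((1-x) ^ (b-1) : ℝ) : ℂ) by push_cast; ring,
      Complex.ofReal_cpow hx0, Complex.ofReal_cpow (by linarith : (0:ℝ) ≤ 1 - x)]
    push_cast
    ring
  have hid := Complex.Gamma_mul_Gamma_eq_betaIntegral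
    (s := (a:ℂ)) (t := (b:ℂ)) (by simpa using ha) (by simpa using hb)
  rw [hcb] at hid
  have hab : (a:ℂ) + b = ((a+b : ℝ) : ℂ) := by push_cast; ring
  rw [hab, Complex.Gamma_ofReal, Complex.Gamma_ofReal, Complex.Gamma_ofReal] at hid
  have h2 : (Real.Gamma a * Real.Gamma b : ℝ)
      = Real.Gamma (a+b) * ∫ v in (0:ℝ)..1, v ^ (a - 1) * (1 - v) ^ (b - 1) := by
    exact_mod_cast hid
  have hG : Real.Gamma (a + b) ≠ 0 := (Real.Gamma_pos_of_pos (by linarith)).ne'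
  field_simp [hG] at h2 ⊢
  linarith [h2]

lemma kernel_beta {α s x : ℝ} (hα : 0 < α) (hα1 : α < 1) (hsx : s < x) :
    ∫ t in s..x, (t - s) ^ (-α) * (x - t) ^ (α - 1)
      = Real.Gamma (1 - α) * Real.Gamma α := by
  have hc : (0:ℝ) < x - s := by linarith
  -- substitute t = u + s
  have h1 : ∫ t in s..x, (t - s) ^ (-α) * (x - t) ^ (α - 1)
      = ∫ u in (0:ℝ)..(x - s), u ^ (-α) * ((x - s) - u) ^ (α - 1) := by
    have := intervalIntegral.integral_comp_add_right
      (a := (0:ℝ)) (b := x - s) (fun t => (t - s) ^ (-α) * (x - t) ^ (α - 1)) s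
    simp only [zero_add, sub_add_cancel] at this
    rw [← this]
    apply intervalIntegral.integral_congr
    intro u _
    ring_nf
  rw [h1]
  -- substitute u = (x-s) * v
  have h2 := intervalIntegral.integral_comp_mul_left
    (a := (0:ℝ)) (b := 1) (fun u => u ^ (-α) * ((x - s) - u) ^ (α - 1)) hc.ne'
  simp only [mul_zero, mul_one] at h2
  have h3 : ∫ u in (0:ℝ)..(x-s), u ^ (-α) * ((x - s) - u) ^ (α - 1)
      = (x - s) * ∫ v in (0:ℝ)..1, ((x-s) * v) ^ (-α) * ((x - s) - (x-s)*v) ^ (α - 1) := by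
    rw [h2, smul_eq_mul, ← mul_assoc, mul_inv_cancel₀ hc.ne', one_mul]
  rw [h3]
  have h4 : ∫ v in (0:ℝ)..1, ((x-s) * v) ^ (-α) * ((x - s) - (x-s)*v) ^ (α - 1)
      = (x-s)^(-α) * (x-s)^(α-1) * ∫ v in (0:ℝ)..1, v ^ ((1-α) - 1) * (1 - v) ^ (α - 1) := by
    rw [← intervalIntegral.integral_const_mul]
    apply intervalIntegral.integral_congr
    intro v hv
    rw [Set.uIcc_of_le (by norm_num : (0:ℝ) ≤ 1)] at hv
    obtain ⟨hv0, hv1⟩ := hv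
    have e1 : ((x-s) * v) ^ (-α) = (x-s)^(-α) * v ^ (-α) :=
      Real.mul_rpow hc.le hv0
    have e2 : ((x - s) - (x-s)*v) = (x-s) * (1 - v) := by ring
    have e3 : ((x-s) * (1-v)) ^ (α-1) = (x-s)^(α-1) * (1-v)^(α-1) :=
      Real.mul_rpow hc.le (by linarith)
    simp only [e1, e2, e3]
    rw [show (1 - α - 1 : ℝ) = -α by ring]
    ring
  rw [h4, real_beta (by linarith : (0:ℝ) < 1 - α) hα]
  have : (1 - α + α : ℝ) = 1 := by ring
  rw [this, Real.Gamma_one]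
  have hpow : (x - s) * ((x-s)^(-α) * (x-s)^(α-1)) = 1 := by
    nth_rewrite 1 [show (x - s) = (x-s)^(1:ℝ) from (Real.rpow_one _).symm]
    rw [← Real.rpow_add hc, ← Real.rpow_add hc,
      show (1:ℝ) + (-α + (α - 1)) = 0 by ring, Real.rpow_zero]
  rw [div_one]
  calc (x - s) * ((x-s)^(-α) * (x-s)^(α-1) * (Real.Gamma (1-α) * Real.Gamma α))
      = ((x - s) * ((x-s)^(-α) * (x-s)^(α-1))) * (Real.Gamma (1-α) * Real.Gamma α) := by ring
    _ = Real.Gamma (1-α) * Real.Gamma α := by rw [hpow, one_mul]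


lemma kernel_simple {α s x : ℝ} (hα : 0 < α) (hsx : s ≤ x) :
    ∫ t in s..x, (x - t) ^ (α - 1) = (x - s) ^ α / α := by
  have := intervalIntegral.integral_comp_sub_left (a := s) (b := x)
    (fun u => u ^ (α - 1)) x
  rw [this, sub_self]
  rw [integral_rpow (Or.inl (by linarith : (-1:ℝ) < α - 1))]
  rw [sub_add_cancel, Real.zero_rpow hα.ne']
  ring

lemma kernel_simple' {α s x : ℝ} (hα : 0 < α) (hsx : s ≤ x) :
    ∫ t in s..x, (t - s) ^ (α - 1) = (x - s) ^ α / α := by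
  rw [integral_comp_sub_right (fun u => u ^ (α - 1)) s, sub_self]
  rw [integral_rpow (Or.inl (by linarith : (-1:ℝ) < α - 1))]
  rw [sub_add_cancel, Real.zero_rpow hα.ne']
  ring

lemma meas_rpow_aux (e : ℝ) : Measurable (fun t : ℝ => t ^ e) := by measurability

lemma meas_kernel {ea eb s x : ℝ} : Measurable (fun t => (t - s) ^ ea * (x - t) ^ eb) :=
  ((meas_rpow_aux ea).comp (measurable_id.sub measurable_const)).mul
    ((meas_rpow_aux eb).comp (measurable_const.sub measurable_id))

lemma left_rpow_intble {e s x : ℝ} (he : -1 < e) :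
    IntervalIntegrable (fun t => (t - s) ^ e) volume s x := by
  have := (intervalIntegral.intervalIntegrable_rpow' (a := 0) (b := x - s) he).comp_sub_right s
  simpa using this

lemma right_rpow_intble {e s x : ℝ} (he : -1 < e) :
    IntervalIntegrable (fun t => (x - t) ^ e) volume s x := by
  have := (intervalIntegral.intervalIntegrable_rpow' (a := 0) (b := x - s) he).comp_sub_left x
  simp only [sub_zero, sub_sub_cancel] at this
  exact this.symm

lemma kest {ea eb s x : ℝ} (hea : -1 < ea) (hea0 : ea ≤ 0)
    (heb : -1 < eb) (heb0 : eb ≤ 0) (hsx : s < x) :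
    IntervalIntegrable (fun t => (t - s) ^ ea * (x - t) ^ eb) volume s x ∧
    ∫ t in s..x, (t - s) ^ ea * (x - t) ^ eb
      ≤ (x - s) ^ (ea + eb + 1) * (2 ^ (-ea) / (eb + 1) + 2 ^ (-eb) / (ea + 1)) := by
  set c : ℝ := (x - s) / 2 with hc_def
  have hxs : (0:ℝ) < x - s := by linarith
  have hc : 0 < c := by positivity
  set G : ℝ → ℝ := fun t => c ^ ea * (x - t) ^ eb + (t - s) ^ ea * c ^ eb with hG_def
  have hG1 : IntervalIntegrable (fun t => (x - t) ^ eb) volume s x := right_rpow_intble heb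
  have hG2 : IntervalIntegrable (fun t => (t - s) ^ ea) volume s x := left_rpow_intble hea
  have hGint : IntervalIntegrable G volume s x := (hG1.const_mul _).add (hG2.mul_const _)
  -- pointwise bound on [s, x]
  have hdom : ∀ t ∈ Icc s x, (t - s) ^ ea * (x - t) ^ eb ≤ G t := by
    intro t ht
    obtain ⟨ht1, ht2⟩ := ht
    have h1 : 0 ≤ t - s := by linarith
    have h2 : 0 ≤ x - t := by linarith
    rcases le_total c (t - s) with h | h
    · have : (t - s) ^ ea ≤ c ^ ea := Real.rpow_le_rpow_of_nonpos hc h hea0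
      have hb1 : (t - s) ^ ea * (x - t) ^ eb ≤ c ^ ea * (x - t) ^ eb :=
        mul_le_mul_of_nonneg_right this (Real.rpow_nonneg h2 _)
      have hb2 : 0 ≤ (t - s) ^ ea * c ^ eb := by positivity
      simp only [hG_def]; linarith
    · have hxt : c ≤ x - t := by
        have : t - s + (x - t) = x - s := by ring
        simp only [hc_def] at h ⊢; linarith
      have : (x - t) ^ eb ≤ c ^ eb := Real.rpow_le_rpow_of_nonpos hc hxt heb0
      have hb1 : (t - s) ^ ea * (x - t) ^ eb ≤ (t - s) ^ ea * c ^ eb :=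
        mul_le_mul_of_nonneg_left this (Real.rpow_nonneg h1 _)
      have hb2 : 0 ≤ c ^ ea * (x - t) ^ eb := by positivity
      simp only [hG_def]; linarith
  have hmeas : Measurable (fun t => (t - s) ^ ea * (x - t) ^ eb) := meas_kernel
  have hker_int : IntervalIntegrable (fun t => (t - s) ^ ea * (x - t) ^ eb) volume s x := by
    apply hGint.mono_fun hmeas.aestronglyMeasurable
    rw [Filter.EventuallyLE, ae_restrict_iff' measurableSet_uIoc]
    apply Filter.Eventually.of_forall
    intro t ht
    rw [Set.uIoc_of_le hsx.le] at ht
    have h1 : 0 ≤ t - s := by linarith [ht.1]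
    have h2 : 0 ≤ x - t := by linarith [ht.2]
    have hGnn : 0 ≤ G t := by simp only [hG_def]; positivity
    rw [Real.norm_eq_abs, Real.norm_eq_abs, abs_of_nonneg (by positivity), abs_of_nonneg hGnn]
    exact hdom t ⟨by linarith [ht.1], ht.2⟩
  refine ⟨hker_int, ?_⟩
  have hGval : ∫ t in s..x, G t
      = c ^ ea * ((x - s) ^ (eb+1) / (eb+1)) + ((x - s) ^ (ea+1) / (ea+1)) * c ^ eb := by
    simp only [hG_def]
    have k1 : ∫ t in s..x, (x - t) ^ eb = (x - s) ^ (eb+1) / (eb+1) := by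
      have := kernel_simple (by linarith : (0:ℝ) < eb + 1) hsx.le (s := s) (x := x)
      simpa using this
    have k2 : ∫ t in s..x, (t - s) ^ ea = (x - s) ^ (ea+1) / (ea+1) := by
      have := kernel_simple' (by linarith : (0:ℝ) < ea + 1) hsx.le (s := s) (x := x)
      simpa using this
    rw [intervalIntegral.integral_add ((hG1.const_mul _)) ((hG2.mul_const _)),
      intervalIntegral.integral_const_mul, intervalIntegral.integral_mul_const, k1, k2]
  calc ∫ t in s..x, (t - s) ^ ea * (x - t) ^ eb ≤ ∫ t in s..x, G t :=
        intervalIntegral.integral_mono_on hsx.le hker_int hGint hdom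
    _ = (x - s) ^ (ea + eb + 1) * (2 ^ (-ea) / (eb + 1) + 2 ^ (-eb) / (ea + 1)) := by
        rw [hGval]
        have hcpow : ∀ e : ℝ, c ^ e = (x - s) ^ e * 2 ^ (-e) := by
          intro e
          rw [hc_def, div_eq_mul_inv, Real.mul_rpow hxs.le (by norm_num),
            Real.inv_rpow (by norm_num), ← Real.rpow_neg (by norm_num)]
        rw [hcpow ea, hcpow eb]
        have e1 : (x-s) ^ ea * (x-s) ^ (eb+1) = (x-s) ^ (ea+eb+1) := by
          rw [← Real.rpow_add hxs, show ea+(eb+1) = ea+eb+1 by ring]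
        have e2 : (x-s) ^ (ea+1) * (x-s) ^ eb = (x-s) ^ (ea+eb+1) := by
          rw [← Real.rpow_add hxs, show (ea+1)+eb = ea+eb+1 by ring]
        linear_combination ((2:ℝ) ^ (-ea) / (eb+1)) * e1 + ((2:ℝ) ^ (-eb) / (ea+1)) * e2

lemma triangle_swap {x ea eb : ℝ} (hx : 0 < x) (hea : -1 < ea) (hea0 : ea ≤ 0)
    (heb : -1 < eb) (heb0 : eb ≤ 0) (hσ : 0 ≤ ea + eb + 1)
    {f : ℝ → ℝ} (hf : IntegrableOn f (Ioc 0 x)) :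
    (∫ t in Ioc 0 x, (∫ s in Ioc 0 t, f s * (t - s) ^ ea) * (x - t) ^ eb)
      = (∫ s in Ioc 0 x, f s * ∫ t in Ioc s x, (t - s) ^ ea * (x - t) ^ eb)
    ∧ IntegrableOn (fun t => (∫ s in Ioc 0 t, f s * (t - s) ^ ea) * (x - t) ^ eb) (Ioc 0 x) := by
  set μ0 := volume.restrict (Ioc (0:ℝ) x) with hμ0
  set C : ℝ := x ^ (ea + eb + 1) * (2 ^ (-ea) / (eb + 1) + 2 ^ (-eb) / (ea + 1)) with hC
  set K : ℝ × ℝ → ℝ := fun p =>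
    {q : ℝ × ℝ | q.2 ≤ q.1}.indicator
      (fun q => f q.2 * ((q.1 - q.2) ^ ea * (x - q.1) ^ eb)) p with hK
  have hsetm : MeasurableSet {q : ℝ × ℝ | q.2 ≤ q.1} :=
    measurableSet_le measurable_snd measurable_fst
  have hKmeas : AEStronglyMeasurable K (μ0.prod μ0) := by
    apply AEStronglyMeasurable.indicator _ hsetm
    exact (hf.aestronglyMeasurable.comp_snd).mul
      ((((meas_rpow_aux ea).comp (measurable_fst.sub measurable_snd)).mul
        ((meas_rpow_aux eb).comp (measurable_const.sub measurable_fst))).aestronglyMeasurable)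
  -- t-sections as indicator functions
  have hsec_t : ∀ t : ℝ, (fun s => K (t, s))
      = (Iic t).indicator (fun s => f s * ((t - s) ^ ea * (x - t) ^ eb)) := by
    intro t; funext s
    simp only [hK, Set.indicator, mem_setOf_eq, mem_Iic]
  have hsec_s : ∀ s : ℝ, (fun t => K (t, s))
      = (Ici s).indicator (fun t => f s * ((t - s) ^ ea * (x - t) ^ eb)) := by
    intro s; funext t
    simp only [hK, Set.indicator, mem_setOf_eq, mem_Ici]
  -- restriction identities
  have hres_t : ∀ t ∈ Ioc (0:ℝ) x, μ0.restrict (Iic t) = volume.restrict (Ioc 0 t) := by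
    intro t ht
    rw [hμ0, Measure.restrict_restrict measurableSet_Iic]
    congr 1
    ext s
    simp only [mem_inter_iff, mem_Iic, mem_Ioc]
    constructor
    · rintro ⟨h1, h2, h3⟩; exact ⟨h2, h1⟩
    · rintro ⟨h1, h2⟩; exact ⟨h2, h1, h2.trans ht.2⟩
  have hres_s : ∀ s ∈ Ioc (0:ℝ) x, μ0.restrict (Ici s) = volume.restrict (Icc s x) := by
    intro s hs
    rw [hμ0, Measure.restrict_restrict measurableSet_Ici]
    congr 1
    ext t
    simp only [mem_inter_iff, mem_Ici, mem_Ioc, mem_Icc]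
    constructor
    · rintro ⟨h1, _, h3⟩; exact ⟨h1, h3⟩
    · rintro ⟨h1, h2⟩; exact ⟨h1, lt_of_lt_of_le hs.1 h1, h2⟩
  -- marginal computation in t
  have ha : ∀ t ∈ Ioc (0:ℝ) x, (∫ s, K (t, s) ∂μ0)
      = (∫ s in Ioc 0 t, f s * (t - s) ^ ea) * (x - t) ^ eb := by
    intro t ht
    rw [hsec_t t, MeasureTheory.integral_indicator measurableSet_Iic, hres_t t ht]
    rw [show (fun s => f s * ((t - s) ^ ea * (x - t) ^ eb))
        = (fun s => (f s * (t - s) ^ ea) * (x - t) ^ eb) by funext s; ring]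
    exact integral_mul_const _ _
  -- marginal computation in s
  have hb : ∀ s ∈ Ioc (0:ℝ) x, (∫ t, K (t, s) ∂μ0)
      = f s * ∫ t in Ioc s x, (t - s) ^ ea * (x - t) ^ eb := by
    intro s hs
    rw [hsec_s s, MeasureTheory.integral_indicator measurableSet_Ici, hres_s s hs,
      integral_Icc_eq_integral_Ioc]
    exact integral_const_mul _ _
  -- integrability of K on the product
  have hKint : Integrable K (μ0.prod μ0) := by
    rw [integrable_prod_iff' hKmeas]
    have hsae : ∀ᵐ s ∂μ0, s ∈ Ioo (0:ℝ) x := by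
      have h1 : ∀ᵐ s ∂μ0, s ∈ Ioc (0:ℝ) x := ae_restrict_mem measurableSet_Ioc
      have h2 : ∀ᵐ s ∂(volume : Measure ℝ), s ≠ x := by
        rw [Filter.Eventually]
        rw [show {s : ℝ | s ≠ x} = {x}ᶜ by ext; simp]
        exact compl_mem_ae_iff.mpr (measure_singleton x)
      filter_upwards [h1, ae_restrict_of_ae h2] with s h1 h2
      exact ⟨h1.1, lt_of_le_of_ne h1.2 h2⟩
    constructor
    · filter_upwards [hsae] with s hs
      rw [hsec_s s]
      rw [integrable_indicator_iff measurableSet_Ici]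
      have : IntegrableOn (fun t => f s * ((t - s) ^ ea * (x - t) ^ eb)) (Icc s x) volume := by
        apply Integrable.const_mul
        have hker := (kest hea hea0 heb heb0 hs.2).1.1
        exact hker.congr_set_ae (Ioc_ae_eq_Icc (μ := volume) (a := s) (b := x)).symm
      rw [IntegrableOn, hres_s s ⟨hs.1, hs.2.le⟩]
      exact this
    · apply Integrable.mono' (g := fun s => ‖f s‖ * C)
      · exact hf.norm.mul_const C
      · have h1 : AEStronglyMeasurable (fun q : ℝ × ℝ => ‖K q.swap‖) (μ0.prod μ0) :=
          hKmeas.norm.prod_swap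
        exact h1.integral_prod_right'
      · filter_upwards [hsae] with s hs
        have hnn : 0 ≤ ∫ t, ‖K (t, s)‖ ∂μ0 := integral_nonneg (fun t => norm_nonneg _)
        rw [Real.norm_eq_abs, abs_of_nonneg hnn]
        have heq1 : ∀ t : ℝ, ‖K (t, s)‖
            = (Ici s).indicator (fun t => ‖f s * ((t - s) ^ ea * (x - t) ^ eb)‖) t := by
          intro t
          rw [congrFun (hsec_s s) t]
          exact norm_indicator_eq_indicator_norm _ _
        calc ∫ t, ‖K (t, s)‖ ∂μ0
            = ∫ t, (Ici s).indicator (fun t => ‖f s * ((t - s) ^ ea * (x - t) ^ eb)‖) t ∂μ0 := by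
              exact integral_congr_ae (Filter.Eventually.of_forall heq1)
          _ = ∫ t in Icc s x, ‖f s * ((t - s) ^ ea * (x - t) ^ eb)‖ := by
              rw [MeasureTheory.integral_indicator measurableSet_Ici, hres_s s ⟨hs.1, hs.2.le⟩]
          _ = ∫ t in Icc s x, ‖f s‖ * ((t - s) ^ ea * (x - t) ^ eb) := by
              apply setIntegral_congr_fun measurableSet_Icc
              intro t ht
              show ‖f s * ((t - s) ^ ea * (x - t) ^ eb)‖
                  = ‖f s‖ * ((t - s) ^ ea * (x - t) ^ eb)
              rw [norm_mul]
              congr 1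
              rw [Real.norm_eq_abs, abs_of_nonneg]
              exact mul_nonneg (Real.rpow_nonneg (by linarith [ht.1]) _)
                (Real.rpow_nonneg (by linarith [ht.2]) _)
          _ = ‖f s‖ * ∫ t in Ioc s x, (t - s) ^ ea * (x - t) ^ eb := by
              rw [setIntegral_congr_set (Ioc_ae_eq_Icc (μ := volume)).symm]
              exact integral_const_mul _ _
          _ ≤ ‖f s‖ * C := by
              apply mul_le_mul_of_nonneg_left _ (norm_nonneg _)
              have hb2 := (kest hea hea0 heb heb0 hs.2).2
              rw [intervalIntegral.integral_of_le hs.2.le] at hb2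
              refine hb2.trans ?_
              rw [hC]
              have hC0 : (0:ℝ) ≤ 2 ^ (-ea) / (eb + 1) + 2 ^ (-eb) / (ea + 1) :=
                le_of_lt (add_pos
                  (div_pos (Real.rpow_pos_of_pos two_pos _) (by linarith))
                  (div_pos (Real.rpow_pos_of_pos two_pos _) (by linarith)))
              apply mul_le_mul_of_nonneg_right _ hC0
              exact Real.rpow_le_rpow (by linarith [hs.2]) (by linarith [hs.1]) hσ
  -- Fubini
  have hswap : ∫ t, (∫ s, K (t, s) ∂μ0) ∂μ0 = ∫ s, (∫ t, K (t, s) ∂μ0) ∂μ0 := by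
    apply MeasureTheory.integral_integral_swap (f := fun t s => K (t, s))
    exact hKint
  constructor
  · calc (∫ t in Ioc (0:ℝ) x, (∫ s in Ioc 0 t, f s * (t - s) ^ ea) * (x - t) ^ eb)
        = ∫ t, (∫ s, K (t, s) ∂μ0) ∂μ0 :=
          (setIntegral_congr_fun measurableSet_Ioc (fun t ht => (ha t ht).symm) : _)
      _ = ∫ s, (∫ t, K (t, s) ∂μ0) ∂μ0 := hswap
      _ = ∫ s in Ioc (0:ℝ) x, f s * ∫ t in Ioc s x, (t - s) ^ ea * (x - t) ^ eb :=
          (setIntegral_congr_fun measurableSet_Ioc (fun s hs => hb s hs) : _)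
  · have hmarg : Integrable (fun t => ∫ s, K (t, s) ∂μ0) μ0 := hKint.integral_prod_left
    apply hmarg.congr
    filter_upwards [ae_restrict_mem measurableSet_Ioc] with t ht
    exact ha t ht

end Helpers

open MeasureTheory Set Filter Topology

/-- Left Riemann–Liouville fractional integral of order `α` based at `a` (real-valued). -/
noncomputable def RLIplusR (α a : ℝ) (f : ℝ → ℝ) (x : ℝ) : ℝ :=
  (1 / Real.Gamma α) * ∫ t in a..x, f t * (x - t) ^ (α - 1)

/-- Right Riemann–Liouville fractional integral of order `α` based at `b` (real-valued). -/
noncomputable def RLIminusR (α b : ℝ) (f : ℝ → ℝ) (x : ℝ) : ℝ :=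
  (1 / Real.Gamma α) * ∫ t in x..b, f t * (t - x) ^ (α - 1)

/-- Left Riemann–Liouville fractional derivative of order `α` (`0 < α < 1`), real-valued. -/
noncomputable def RLDplusR (α a : ℝ) (f : ℝ → ℝ) (x : ℝ) : ℝ :=
  deriv (RLIplusR (1 - α) a f) x

/-- Right Riemann–Liouville fractional derivative of order `α` (`0 < α < 1`), real-valued. -/
noncomputable def RLDminusR (α b : ℝ) (f : ℝ → ℝ) (x : ℝ) : ℝ :=
  - deriv (RLIminusR (1 - α) b f) x

/-- Reduction of the two-sided fractional eigenvalue equation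
`(D_{0+}^α φ)(x) + (D_{l-}^α φ)(x) = k φ(x)` (a.e. on `(0,l)`) to the Volterra integral
equation `φ(x) = (b/Γ(α)) x^{α-1} - (1/Γ(α)) ∫_0^x (-kφ(s) + (D_{l-}^α φ)(s)) (x-s)^{α-1} ds`
(a.e. on `(0,l)`), where `b = lim_{x→0+} (I_{0+}^{1-α} φ)(x)`. -/
theorem fractional_eigen_eq_to_volterra
    (α l k : ℝ) (hα : 0 < α) (hα1 : α < 1) (hl : 0 < l)
    (φ : ℝ → ℝ) (b : ℝ)
    (hφint : IntervalIntegrable φ MeasureTheory.volume 0 l)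
    (hacF : ∀ δ ∈ Set.Ioo 0 l, ∀ x ∈ Set.Icc δ l,
      RLIplusR (1 - α) 0 φ x = RLIplusR (1 - α) 0 φ δ + ∫ t in δ..x, RLDplusR α 0 φ t)
    (hblim : Filter.Tendsto (RLIplusR (1 - α) 0 φ) (nhdsWithin 0 (Set.Ioi 0)) (nhds b))
    (hDmint : IntervalIntegrable (RLDminusR α l φ) MeasureTheory.volume 0 l)
    (heq : ∀ᵐ x ∂(MeasureTheory.volume), x ∈ Set.Ioo 0 l →
      RLDplusR α 0 φ x + RLDminusR α l φ x = k * φ x) :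
    ∀ᵐ x ∂(MeasureTheory.volume), x ∈ Set.Ioo 0 l →
      φ x = (b / Real.Gamma α) * x ^ (α - 1)
        - (1 / Real.Gamma α) *
            ∫ s in (0:ℝ)..x, (-(k * φ s) + RLDminusR α l φ s) * (x - s) ^ (α - 1) := by
  have hΓ : 0 < Real.Gamma α := Real.Gamma_pos_of_pos hα
  have hΓ' : 0 < Real.Gamma (1 - α) := Real.Gamma_pos_of_pos (by linarith)
  set ψ : ℝ → ℝ := fun s => k * φ s - RLDminusR α l φ s with hψdef
  have hψint : IntervalIntegrable ψ volume 0 l := (hφint.const_mul k).sub hDmint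
  have hmono : ∀ {f : ℝ → ℝ}, IntervalIntegrable f volume 0 l → ∀ {x : ℝ}, 0 ≤ x → x ≤ l →
      IntervalIntegrable f volume 0 x := by
    intro f hf x hx0 hxl
    apply hf.mono_set
    rw [Set.uIcc_of_le hx0, Set.uIcc_of_le (hx0.trans hxl)]
    exact Icc_subset_Icc le_rfl hxl
  -- the primitive of ψ tends to 0 at 0+
  have hΨ0 : Tendsto (fun t => ∫ s in Ioc (0:ℝ) t, ψ s) (𝓝[>] (0:ℝ)) (𝓝 0) := by
    have hcont := intervalIntegral.continuousOn_primitive (a := 0) (b := l) (f := ψ)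
      (μ := volume) (hψint.1.congr_set_ae Ioc_ae_eq_Icc.symm)
    have h0 : ContinuousWithinAt (fun t => ∫ s in Ioc (0:ℝ) t, ψ s) (Icc 0 l) 0 :=
      hcont 0 ⟨le_rfl, hl.le⟩
    have h1 : Tendsto (fun t => ∫ s in Ioc (0:ℝ) t, ψ s) (𝓝[Icc 0 l] 0)
        (𝓝 (∫ s in Ioc (0:ℝ) (0:ℝ), ψ s)) := h0
    rw [show (∫ s in Ioc (0:ℝ) (0:ℝ), ψ s) = 0 by simp] at h1
    apply h1.mono_left
    rw [nhdsWithin_le_iff]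
    exact Filter.mem_of_superset (Ioo_mem_nhdsGT_of_mem ⟨le_rfl, hl⟩) Ioo_subset_Icc_self
  -- Step 1: F = b + primitive of ψ on (0, l)
  have hFeq : ∀ x ∈ Ioo (0:ℝ) l, RLIplusR (1 - α) 0 φ x = b + ∫ s in Ioc (0:ℝ) x, ψ s := by
    intro x hx
    have hmem : Ioc (0:ℝ) x ∈ 𝓝[>] (0:ℝ) :=
      Filter.mem_of_superset (Ioo_mem_nhdsGT_of_mem ⟨le_rfl, hx.1⟩) Ioo_subset_Ioc_self
    have hev : ∀ᶠ δ in 𝓝[>] (0:ℝ),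
        RLIplusR (1 - α) 0 φ x - (∫ s in Ioc (0:ℝ) x, ψ s)
          = RLIplusR (1 - α) 0 φ δ - ∫ s in Ioc (0:ℝ) δ, ψ s := by
      filter_upwards [hmem] with δ hδ
      have h1 := hacF δ ⟨hδ.1, lt_of_le_of_lt hδ.2 hx.2⟩ x ⟨hδ.2, hx.2.le⟩
      have h2 : (∫ t in δ..x, RLDplusR α 0 φ t) = ∫ t in δ..x, ψ t := by
        apply intervalIntegral.integral_congr_ae
        filter_upwards [heq] with t h ht'
        rw [Set.uIoc_of_le hδ.2] at ht'
        have h3 := h ⟨lt_trans hδ.1 ht'.1, lt_of_le_of_lt ht'.2 hx.2⟩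
        simp only [hψdef]
        linarith
      have h4 : (∫ t in δ..x, ψ t)
          = (∫ s in Ioc (0:ℝ) x, ψ s) - ∫ s in Ioc (0:ℝ) δ, ψ s := by
        rw [← intervalIntegral.integral_of_le hx.1.le, ← intervalIntegral.integral_of_le hδ.1.le]
        exact (intervalIntegral.integral_interval_sub_left (hmono hψint hx.1.le hx.2.le)
          (hmono hψint hδ.1.le (hδ.2.trans hx.2.le))).symm
      rw [h1, h2, h4]; ring
    have hconst : Tendsto (fun δ => RLIplusR (1 - α) 0 φ δ - ∫ s in Ioc (0:ℝ) δ, ψ s)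
        (𝓝[>] (0:ℝ)) (𝓝 (RLIplusR (1 - α) 0 φ x - ∫ s in Ioc (0:ℝ) x, ψ s)) :=
      Tendsto.congr' hev tendsto_const_nhds
    have hlim2 : Tendsto (fun δ => RLIplusR (1 - α) 0 φ δ - ∫ s in Ioc (0:ℝ) δ, ψ s)
        (𝓝[>] (0:ℝ)) (𝓝 (b - 0)) := hblim.sub hΨ0
    have h5 := tendsto_nhds_unique hconst hlim2
    linarith
  set G : ℝ → ℝ := fun t => b / Real.Gamma α * t ^ (α - 1)
      + 1 / Real.Gamma α * ∫ s in Ioc (0:ℝ) t, ψ s * (t - s) ^ (α - 1) with hGdef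
  -- Step 2: key identity between primitives of φ and G
  have hkey : ∀ x ∈ Ioo (0:ℝ) l, IntegrableOn G (Ioc 0 x)
      ∧ (∫ s in Ioc (0:ℝ) x, φ s) = ∫ s in Ioc (0:ℝ) x, G s := by
    intro x hx
    have hφx : IntegrableOn φ (Ioc 0 x) := (hmono hφint hx.1.le hx.2.le).1
    have hψx : IntegrableOn ψ (Ioc 0 x) := (hmono hψint hx.1.le hx.2.le).1
    have hA := triangle_swap hx.1 (by linarith : (-1:ℝ) < -α) (by linarith)
      (by linarith : (-1:ℝ) < α - 1) (by linarith) (by linarith : (0:ℝ) ≤ -α + (α-1) + 1) hφx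
    have hB := triangle_swap hx.1 (by norm_num : (-1:ℝ) < 0) le_rfl
      (by linarith : (-1:ℝ) < α - 1) (by linarith) (by linarith : (0:ℝ) ≤ 0 + (α-1) + 1) hψx
    have hC := triangle_swap hx.1 (by linarith : (-1:ℝ) < α - 1) (by linarith)
      (by norm_num : (-1:ℝ) < 0) le_rfl (by linarith : (0:ℝ) ≤ (α-1) + 0 + 1) hψx
    simp only [Real.rpow_zero, mul_one, one_mul] at hB hC
    have hrpow_int : IntegrableOn (fun t : ℝ => t ^ (α - 1)) (Ioc 0 x) :=
      (intervalIntegral.intervalIntegrable_rpow' (a := 0) (b := x) (by linarith)).1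
    have hGx : IntegrableOn G (Ioc 0 x) :=
      (hrpow_int.const_mul _).add (hC.2.const_mul _)
    refine ⟨hGx, ?_⟩
    -- value of the inner fractional integral of φ
    have hFval : ∀ t ∈ Ioc (0:ℝ) x, (∫ s in Ioc (0:ℝ) t, φ s * (t - s) ^ (-α))
        = Real.Gamma (1 - α) * (b + ∫ s in Ioc (0:ℝ) t, ψ s) := by
      intro t ht
      have h1 := hFeq t ⟨ht.1, lt_of_le_of_lt ht.2 hx.2⟩
      rw [RLIplusR, intervalIntegral.integral_of_le ht.1.le,
        show (1 - α - 1 : ℝ) = -α by ring] at h1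
      calc (∫ s in Ioc (0:ℝ) t, φ s * (t - s) ^ (-α))
          = Real.Gamma (1 - α)
            * (1 / Real.Gamma (1 - α) * ∫ s in Ioc (0:ℝ) t, φ s * (t - s) ^ (-α)) := by
            field_simp
        _ = Real.Gamma (1 - α) * (b + ∫ s in Ioc (0:ℝ) t, ψ s) := by rw [h1]
    -- RHS of the φ Fubini identity
    have hI1 : (∫ s in Ioc (0:ℝ) x, φ s * ∫ t in Ioc s x, (t - s) ^ (-α) * (x - t) ^ (α - 1))
        = (Real.Gamma (1 - α) * Real.Gamma α) * ∫ s in Ioc (0:ℝ) x, φ s := by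
      calc (∫ s in Ioc (0:ℝ) x, φ s * ∫ t in Ioc s x, (t - s) ^ (-α) * (x - t) ^ (α - 1))
          = ∫ s in Ioo (0:ℝ) x, φ s * ∫ t in Ioc s x, (t - s) ^ (-α) * (x - t) ^ (α - 1) :=
            (setIntegral_congr_set Ioo_ae_eq_Ioc).symm
        _ = ∫ s in Ioo (0:ℝ) x, φ s * (Real.Gamma (1 - α) * Real.Gamma α) := by
            apply setIntegral_congr_fun measurableSet_Ioo
            intro s hs
            have : (∫ t in Ioc s x, (t - s) ^ (-α) * (x - t) ^ (α - 1))
                = Real.Gamma (1 - α) * Real.Gamma α := by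
              rw [← intervalIntegral.integral_of_le hs.2.le]
              exact kernel_beta hα hα1 hs.2
            simp only [this]
        _ = (Real.Gamma (1 - α) * Real.Gamma α) * ∫ s in Ioo (0:ℝ) x, φ s := by
            rw [MeasureTheory.integral_mul_const]; ring
        _ = (Real.Gamma (1 - α) * Real.Gamma α) * ∫ s in Ioc (0:ℝ) x, φ s := by
            rw [setIntegral_congr_set Ioo_ae_eq_Ioc]
    -- evaluate the ψ Fubini identities
    have hBval : (∫ t in Ioc (0:ℝ) x, (∫ s in Ioc (0:ℝ) t, ψ s) * (x - t) ^ (α - 1))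
        = ∫ s in Ioc (0:ℝ) x, ψ s * ((x - s) ^ α / α) := by
      rw [hB.1]
      apply setIntegral_congr_fun measurableSet_Ioc
      intro s hs
      have : (∫ t in Ioc s x, (x - t) ^ (α - 1)) = (x - s) ^ α / α := by
        rw [← intervalIntegral.integral_of_le hs.2]
        exact kernel_simple hα hs.2
      simp only [this]
    have hCval : (∫ t in Ioc (0:ℝ) x, ∫ s in Ioc (0:ℝ) t, ψ s * (t - s) ^ (α - 1))
        = ∫ s in Ioc (0:ℝ) x, ψ s * ((x - s) ^ α / α) := by
      rw [hC.1]
      apply setIntegral_congr_fun measurableSet_Ioc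
      intro s hs
      have : (∫ t in Ioc s x, (t - s) ^ (α - 1)) = (x - s) ^ α / α := by
        rw [← intervalIntegral.integral_of_le hs.2]
        exact kernel_simple' hα hs.2
      simp only [this]
    have hxt_int : IntegrableOn (fun t : ℝ => (x - t) ^ (α - 1)) (Ioc 0 x) :=
      (right_rpow_intble (s := 0) (x := x) (by linarith)).1
    have hsimple : (∫ t in Ioc (0:ℝ) x, (x - t) ^ (α - 1)) = x ^ α / α := by
      rw [← intervalIntegral.integral_of_le hx.1.le]
      have := kernel_simple (s := (0:ℝ)) (x := x) hα hx.1.le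
      simpa using this
    -- LHS of the φ Fubini identity
    have hLHS : (∫ t in Ioc (0:ℝ) x,
          (∫ s in Ioc (0:ℝ) t, φ s * (t - s) ^ (-α)) * (x - t) ^ (α - 1))
        = Real.Gamma (1 - α) * (b * (x ^ α / α)
            + ∫ s in Ioc (0:ℝ) x, ψ s * ((x - s) ^ α / α)) := by
      have e1 : (∫ t in Ioc (0:ℝ) x,
            (∫ s in Ioc (0:ℝ) t, φ s * (t - s) ^ (-α)) * (x - t) ^ (α - 1))
          = ∫ t in Ioc (0:ℝ) x, ((Real.Gamma (1 - α) * b) * (x - t) ^ (α - 1)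
              + Real.Gamma (1 - α) * ((∫ s in Ioc (0:ℝ) t, ψ s) * (x - t) ^ (α - 1))) := by
        apply setIntegral_congr_fun measurableSet_Ioc
        intro t ht
        simp only [hFval t ht]
        ring
      rw [e1, integral_add (hxt_int.const_mul _) (hB.2.const_mul _),
        MeasureTheory.integral_const_mul, MeasureTheory.integral_const_mul, hsimple, hBval]
      ring
    -- the key scalar identity
    have hIeq : Real.Gamma α * (∫ s in Ioc (0:ℝ) x, φ s)
        = b * (x ^ α / α) + ∫ s in Ioc (0:ℝ) x, ψ s * ((x - s) ^ α / α) := by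
      have h2 : Real.Gamma (1 - α) * (b * (x ^ α / α)
            + ∫ s in Ioc (0:ℝ) x, ψ s * ((x - s) ^ α / α))
          = Real.Gamma (1 - α) * (Real.Gamma α * ∫ s in Ioc (0:ℝ) x, φ s) := by
        rw [← hLHS, hA.1, hI1]; ring
      exact (mul_left_cancel₀ hΓ'.ne' h2).symm
    have hrpowval : (∫ t in Ioc (0:ℝ) x, t ^ (α - 1)) = x ^ α / α := by
      rw [← intervalIntegral.integral_of_le hx.1.le,
        integral_rpow (Or.inl (by linarith : (-1:ℝ) < α - 1))]
      rw [sub_add_cancel, Real.zero_rpow hα.ne']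
      ring
    have hGval : (∫ s in Ioc (0:ℝ) x, G s)
        = b / Real.Gamma α * (x ^ α / α)
          + 1 / Real.Gamma α * ∫ s in Ioc (0:ℝ) x, ψ s * ((x - s) ^ α / α) := by
      rw [hGdef]
      rw [integral_add (hrpow_int.const_mul _) (hC.2.const_mul _),
        MeasureTheory.integral_const_mul, MeasureTheory.integral_const_mul, hrpowval, hCval]
    rw [hGval]
    have hsub : (∫ s in Ioc (0:ℝ) x, ψ s * ((x - s) ^ α / α))
        = Real.Gamma α * (∫ s in Ioc (0:ℝ) x, φ s) - b * (x ^ α / α) := by linarith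
    rw [hsub]
    field_simp
    ring
  -- integrability of G on (0, l)
  have hJl : IntegrableOn (fun t => ∫ s in Ioc (0:ℝ) t, ψ s * (t - s) ^ (α - 1)) (Ioc 0 l) := by
    have h := (triangle_swap hl (by linarith : (-1:ℝ) < α - 1) (by linarith)
      (by norm_num : (-1:ℝ) < 0) le_rfl (by linarith : (0:ℝ) ≤ (α-1) + 0 + 1) hψint.1).2
    simpa [Real.rpow_zero, mul_one] using h
  have hGl : IntegrableOn G (Ioc 0 l) :=
    ((intervalIntegral.intervalIntegrable_rpow' (a := 0) (b := l)
      (by linarith : (-1:ℝ) < α - 1)).1.const_mul _).add (hJl.const_mul _)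
  -- vanishing of the primitive of φ - G on (0, l)
  have huv : ∀ u v : ℝ, u ∈ Ioo (0:ℝ) l → v ∈ Ioo (0:ℝ) l → u ≤ v →
      (∫ s in Ioc u v, (φ s - G s)) = 0 := by
    intro u v hu hv huvle
    have hGIu : IntervalIntegrable G volume 0 u := by
      rw [intervalIntegrable_iff_integrableOn_Ioc_of_le hu.1.le]
      exact (hkey u hu).1
    have hGIv : IntervalIntegrable G volume 0 v := by
      rw [intervalIntegrable_iff_integrableOn_Ioc_of_le hv.1.le]
      exact (hkey v hv).1
    have hIu : (∫ s in Ioc (0:ℝ) u, (φ s - G s)) = 0 := by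
      rw [integral_sub (hmono hφint hu.1.le hu.2.le).1 (hkey u hu).1, (hkey u hu).2, sub_self]
    have hIv : (∫ s in Ioc (0:ℝ) v, (φ s - G s)) = 0 := by
      rw [integral_sub (hmono hφint hv.1.le hv.2.le).1 (hkey v hv).1, (hkey v hv).2, sub_self]
    have h1 : (∫ s in Ioc u v, (φ s - G s))
        = (∫ s in Ioc (0:ℝ) v, (φ s - G s)) - ∫ s in Ioc (0:ℝ) u, (φ s - G s) := by
      rw [← intervalIntegral.integral_of_le huvle, ← intervalIntegral.integral_of_le hu.1.le,
        ← intervalIntegral.integral_of_le hv.1.le]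
      exact (intervalIntegral.integral_interval_sub_left
        ((hmono hφint hv.1.le hv.2.le).sub hGIv) ((hmono hφint hu.1.le hu.2.le).sub hGIu)).symm
    rw [h1, hIu, hIv, sub_zero]
  -- Lebesgue differentiation
  set h : ℝ → ℝ := (Ioo (0:ℝ) l).indicator (fun s => φ s - G s) with hhdef
  have hhint : Integrable h volume := by
    rw [hhdef, integrable_indicator_iff measurableSet_Ioo]
    exact (hφint.1.mono_set Ioo_subset_Ioc_self).sub (hGl.mono_set Ioo_subset_Ioc_self)
  have hLeb := IsUnifLocDoublingMeasure.ae_tendsto_average (μ := (volume : Measure ℝ))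
    hhint.locallyIntegrable 1
  filter_upwards [hLeb] with x hx hmem
  have hball : Tendsto (fun r => ⨍ y in Metric.closedBall x r, h y) (𝓝[>] (0:ℝ)) (𝓝 (h x)) := by
    apply hx (fun _ => x) id tendsto_id
    filter_upwards [self_mem_nhdsWithin] with r hr
    simp only [Metric.mem_closedBall, dist_self, id]
    have : (0:ℝ) < r := hr
    linarith
  have hzero : ∀ᶠ r in 𝓝[>] (0:ℝ), (⨍ y in Metric.closedBall x r, h y) = 0 := by
    have hmem2 : Ioo (0:ℝ) (min x (l - x)) ∈ 𝓝[>] (0:ℝ) :=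
      Ioo_mem_nhdsGT_of_mem ⟨le_rfl, lt_min hmem.1 (by linarith [hmem.2])⟩
    filter_upwards [hmem2] with r hr
    have hr0 : 0 < r := hr.1
    have hrx : r < x := lt_of_lt_of_le hr.2 (min_le_left _ _)
    have hrl : x + r < l := by
      have := lt_of_lt_of_le hr.2 (min_le_right _ _); linarith
    have hsub : Icc (x - r) (x + r) ⊆ Ioo 0 l := by
      intro y hy
      exact ⟨by linarith [hy.1], by linarith [hy.2]⟩
    have hint0 : (∫ y in Metric.closedBall x r, h y) = 0 := by
      rw [Real.closedBall_eq_Icc]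
      calc (∫ y in Icc (x - r) (x + r), h y)
          = ∫ y in Icc (x - r) (x + r), (φ y - G y) := by
            apply setIntegral_congr_fun measurableSet_Icc
            intro y hy
            exact indicator_of_mem (hsub hy) _
        _ = ∫ y in Ioc (x - r) (x + r), (φ y - G y) :=
            (setIntegral_congr_set Ioc_ae_eq_Icc).symm
        _ = 0 := huv (x - r) (x + r) ⟨by linarith, by linarith⟩
              ⟨by linarith, by linarith⟩ (by linarith)
    rw [setAverage_eq, hint0, smul_zero]
  have hx0 : h x = 0 := tendsto_nhds_unique hball
    (Tendsto.congr' (hzero.mono fun r hrr => hrr.symm) tendsto_const_nhds)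
  have hφG : φ x = G x := by
    rw [hhdef] at hx0
    rw [indicator_of_mem hmem] at hx0
    linarith
  have hneg : (∫ s in (0:ℝ)..x, (-(k * φ s) + RLDminusR α l φ s) * (x - s) ^ (α - 1))
      = - ∫ s in Ioc (0:ℝ) x, ψ s * (x - s) ^ (α - 1) := by
    rw [← intervalIntegral.integral_of_le hmem.1.le, ← intervalIntegral.integral_neg]
    apply intervalIntegral.integral_congr
    intro s _
    simp only [hψdef]
    ring
  rw [hφG, hGdef, hneg]
  ring
end

section
/- The Mittag-Leffler function solves the homogeneous right-sided fractional equation: let 0 < α < 1, l > 0, k ∈ ℝ, and define φ(s) := (l−s)^{α−1} · E_{α,α}(k (l−s)^α) for s ∈ (0,l), where E_{α,α}(z) := Σ_{n=0}^∞ z^n / Γ(αn + α). Then for every s ∈ (0,l), (D_{l−}^α φ)(s) = k φ(s). -/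
open MeasureTheory Set Filter Topology

/-- The two-parameter Mittag-Leffler function `E_{α,β}(x) = Σ_{n=0}^∞ xⁿ / Γ(αn + β)`
(real argument). -/
noncomputable def mittagLeffler (α β x : ℝ) : ℝ :=
  ∑' n : ℕ, x ^ n / Real.Gamma (α * n + β)

lemma beta01 {u v : ℝ} (hu : 0 < u) (hv : 0 < v) :
    ∫ x in (0:ℝ)..1, x ^ (u-1) * (1-x) ^ (v-1) =
      Real.Gamma u * Real.Gamma v / Real.Gamma (u+v) := by
  have key := Complex.Gamma_mul_Gamma_eq_betaIntegral (s := (u:ℂ)) (t := (v:ℂ))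
    (by simpa using hu) (by simpa using hv)
  have hbeta : Complex.betaIntegral (u:ℂ) (v:ℂ)
      = ((∫ x in (0:ℝ)..1, x ^ (u-1) * (1-x) ^ (v-1) : ℝ) : ℂ) := by
    rw [Complex.betaIntegral, ← intervalIntegral.integral_ofReal]
    refine intervalIntegral.integral_congr fun x hx => ?_
    rw [uIcc_of_le zero_le_one] at hx
    rw [Complex.ofReal_mul, Complex.ofReal_cpow hx.1, Complex.ofReal_cpow (by linarith [hx.2] : (0:ℝ) ≤ 1 - x)]
    push_cast
    ring
  rw [hbeta, ← Complex.ofReal_add, Complex.Gamma_ofReal, Complex.Gamma_ofReal,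
    Complex.Gamma_ofReal, ← Complex.ofReal_mul, ← Complex.ofReal_mul,
    Complex.ofReal_inj] at key
  have h0 : Real.Gamma (u+v) ≠ 0 := (Real.Gamma_pos_of_pos (by linarith)).ne'
  field_simp [key]
  rw [key]; ring
lemma betaScaled {a b u v : ℝ} (hab : a < b) (hu : 0 < u) (hv : 0 < v) :
    ∫ t in a..b, (b - t) ^ (u-1) * (t - a) ^ (v-1) =
      (b - a) ^ (u+v-1) * (Real.Gamma u * Real.Gamma v / Real.Gamma (u+v)) := by
  have hba : (0:ℝ) < b - a := by linarith
  have key := intervalIntegral.integral_comp_mul_add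
    (a := (0:ℝ)) (b := 1) (f := fun t => (b - t) ^ (u-1) * (t - a) ^ (v-1))
    (c := b - a) hba.ne' a
  simp only [mul_zero, zero_add, mul_one, sub_add_cancel] at key
  have congrArg1 : ∫ x in (0:ℝ)..1, (b - ((b-a) * x + a)) ^ (u-1) * (((b-a) * x + a) - a) ^ (v-1)
      = ∫ x in (0:ℝ)..1, ((b-a)^(u-1) * (b-a)^(v-1)) * (x ^ (v-1) * (1-x) ^ (u-1)) := by
    refine intervalIntegral.integral_congr fun x hx => ?_
    rw [uIcc_of_le zero_le_one] at hx
    have h1 : b - ((b-a) * x + a) = (b-a) * (1-x) := by ring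
    have h2 : ((b-a) * x + a) - a = (b-a) * x := by ring
    rw [h1, h2, Real.mul_rpow hba.le (by linarith [hx.2]), Real.mul_rpow hba.le hx.1]
    ring
  rw [congrArg1] at key
  rw [intervalIntegral.integral_const_mul, beta01 hv hu] at key
  have : ∫ t in a..b, (b - t) ^ (u-1) * (t - a) ^ (v-1)
      = (b-a) * ((b-a)^(u-1) * (b-a)^(v-1) * (Real.Gamma v * Real.Gamma u / Real.Gamma (v+u))) := by
    rw [smul_eq_mul] at key
    have h2 := congrArg (fun z => (b-a) * z) key
    simp only [← mul_assoc, mul_inv_cancel₀ hba.ne', one_mul] at h2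
    rw [← h2]; ring
  rw [this, add_comm v u]
  rw [show u + v - 1 = (u-1) + (v-1) + 1 by ring, Real.rpow_add hba, Real.rpow_add hba,
    Real.rpow_one]
  ring
lemma intervalIntegrable_beta {a b p q : ℝ} (hab : a < b) (hp : -1 < p) (hq : -1 < q) :
    IntervalIntegrable (fun t => (b - t) ^ p * (t - a) ^ q) volume a b := by
  set m := (a + b) / 2 with hm
  have ham : a < m := by simp only [hm]; linarith
  have hmb : m < b := by simp only [hm]; linarith
  have part1 : IntervalIntegrable (fun t => (b - t) ^ p * (t - a) ^ q) volume a m := by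
    have h1 : IntervalIntegrable (fun t => (t - a) ^ q) volume a m := by
      have := (intervalIntegral.intervalIntegrable_rpow' hq (a := 0) (b := m - a)).comp_sub_right a
      simpa using this
    refine h1.continuousOn_mul ?_
    apply ContinuousOn.rpow_const (by fun_prop)
    intro t ht
    rw [uIcc_of_le ham.le] at ht
    exact Or.inl (by simp; linarith [ht.2])
  have part2 : IntervalIntegrable (fun t => (b - t) ^ p * (t - a) ^ q) volume m b := by
    have h1 : IntervalIntegrable (fun t => (b - t) ^ p) volume m b := by
      have := (intervalIntegral.intervalIntegrable_rpow' hp (a := 0) (b := b - m)).comp_sub_left b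
      simpa using this.symm
    refine h1.mul_continuousOn ?_
    apply ContinuousOn.rpow_const (by fun_prop)
    intro t ht
    rw [uIcc_of_le hmb.le] at ht
    exact Or.inl (by simp; linarith [ht.1])
  exact part1.trans part2
lemma Gamma_lb {r x : ℝ} (hr : 1 ≤ r) (hx : 3 ≤ x) :
    r ^ (x - 2) / Real.exp r ≤ Real.Gamma x := by
  have hr0 : (0:ℝ) < r := by linarith
  set n := ⌊x⌋₊ with hn
  have hn3 : 3 ≤ n := Nat.le_floor (by exact_mod_cast hx)
  have hnx : (n:ℝ) ≤ x := Nat.floor_le (by linarith)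
  have hxn : x < n + 1 := Nat.lt_floor_add_one x
  have h1 : Real.Gamma (n:ℝ) ≤ Real.Gamma x := by
    rcases eq_or_lt_of_le hnx with h | h
    · rw [h]
    · exact (Real.Gamma_strictMonoOn_Ici (by simp; omega) (by
        simp only [mem_Ici]; linarith) h).le
  have h2 : Real.Gamma (n:ℝ) = (Nat.factorial (n-1) : ℝ) := by
    have he : ((n-1:ℕ):ℝ) + 1 = (n:ℝ) := by
      push_cast [Nat.cast_sub (by omega : 1 ≤ n)]; ring
    rw [← he, Real.Gamma_nat_eq_factorial]
  have h3 : r ^ ((n:ℝ) - 1) / Real.exp r ≤ (Nat.factorial (n-1) : ℝ) := by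
    rw [div_le_iff₀ (Real.exp_pos r)]
    have hf := Real.pow_div_factorial_le_exp r hr0.le (n-1)
    rw [div_le_iff₀ (by positivity : (0:ℝ) < (Nat.factorial (n-1) : ℝ))] at hf
    calc r ^ ((n:ℝ) - 1) = r ^ (n-1 : ℕ) := by
          rw [← Real.rpow_natCast r (n-1)]
          congr 1
          push_cast [Nat.cast_sub (by omega : 1 ≤ n)]; ring
      _ ≤ Real.exp r * (Nat.factorial (n-1) : ℝ) := hf
      _ = (Nat.factorial (n-1) : ℝ) * Real.exp r := by ring
  have h4 : r ^ (x - 2) ≤ r ^ ((n:ℝ) - 1) :=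
    Real.rpow_le_rpow_of_exponent_le hr (by linarith)
  calc r ^ (x-2) / Real.exp r ≤ r ^ ((n:ℝ)-1) / Real.exp r := by gcongr
    _ ≤ (Nat.factorial (n-1) : ℝ) := h3
    _ = Real.Gamma (n:ℝ) := h2.symm
    _ ≤ Real.Gamma x := h1

lemma ml_summable {a b : ℝ} (ha : 0 < a) (hb : 0 < b) {c : ℝ} (hc : 0 ≤ c) :
    Summable (fun n : ℕ => (n+1 : ℝ) * c ^ n / Real.Gamma (a * n + b)) := by
  set r := (2*c+2) ^ (1/a) with hrdef
  have hcc : (0:ℝ) < 2*c+2 := by linarith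
  have hr1 : 1 ≤ r := Real.one_le_rpow (by linarith) (by positivity)
  have hr0 : (0:ℝ) < r := by linarith
  have hra : r ^ a = 2*c+2 := by
    rw [hrdef, ← Real.rpow_mul hcc.le, one_div_mul_cancel ha.ne', Real.rpow_one]
  have hrapos : (0:ℝ) < r ^ a := Real.rpow_pos_of_pos hr0 a
  have hhalf : c / r ^ a ≤ 1/2 := by
    rw [hra, div_le_div_iff₀ hcc (by norm_num)]; linarith
  obtain ⟨N, hN⟩ := exists_nat_ge ((3 - b)/a)
  rw [← summable_nat_add_iff N]
  have hsum : Summable (fun n : ℕ => (Real.exp r * r^(2-b)) *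
      ((((n + N : ℕ)):ℝ) + 1) * (1/2:ℝ)^((n + N : ℕ))) := by
    have base : Summable (fun m : ℕ => (Real.exp r * r^(2-b)) * ((m + 1 : ℝ) * (1/2:ℝ)^m)) := by
      apply Summable.mul_left
      have g1 : Summable (fun m : ℕ => (m : ℝ) * (1/2:ℝ)^m) := by
        simpa using summable_pow_mul_geometric_of_norm_lt_one 1
          (by norm_num : ‖(1/2:ℝ)‖ < 1)
      have g2 : Summable (fun m : ℕ => (1/2:ℝ)^m) :=
        summable_geometric_of_lt_one (by norm_num) (by norm_num)
      simpa [add_mul, one_mul] using g1.add g2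
    exact ((summable_nat_add_iff N).2 base).congr (fun n => by push_cast; ring)
  apply Summable.of_nonneg_of_le _ _ hsum
  · intro n
    have := Real.Gamma_pos_of_pos (show 0 < a * ((n+N:ℕ):ℝ) + b by positivity)
    positivity
  · intro n
    set m : ℕ := n + N with hm
    have hmN : (N:ℝ) ≤ (m:ℝ) := by exact_mod_cast Nat.le_add_left N n
    have hx3 : 3 ≤ a * m + b := by
      have h5 : (3 - b)/a ≤ (m:ℝ) := le_trans hN hmN
      have := (div_le_iff₀ ha).mp h5
      linarith
    have hGamma : r ^ (a * m + b - 2) / Real.exp r ≤ Real.Gamma (a * m + b) :=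
      Gamma_lb hr1 hx3
    have hGpos : (0:ℝ) < r ^ (a * m + b - 2) / Real.exp r := by positivity
    have key : (m+1 : ℝ) * c ^ m / Real.Gamma (a * m + b)
        ≤ (m+1 : ℝ) * c ^ m / (r ^ (a * m + b - 2) / Real.exp r) := by
      gcongr
    have expand : (m+1 : ℝ) * c ^ m / (r ^ (a * m + b - 2) / Real.exp r)
        = (Real.exp r * r^(2-b)) * ((m+1 : ℝ) * (c / r^a)^m) := by
      rw [Real.rpow_sub hr0, Real.rpow_add hr0, div_pow, ← Real.rpow_natCast (r^a) m,
        ← Real.rpow_mul hr0.le, Real.rpow_sub hr0 2 b]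
      have h1 : r ^ (a * (m:ℝ)) ≠ 0 := (Real.rpow_pos_of_pos hr0 _).ne'
      have h2 : r ^ (b:ℝ) ≠ 0 := (Real.rpow_pos_of_pos hr0 _).ne'
      have h3 : r ^ (2:ℝ) ≠ 0 := (Real.rpow_pos_of_pos hr0 _).ne'
      field_simp
    calc (m+1 : ℝ) * c ^ m / Real.Gamma (a * m + b)
        ≤ (Real.exp r * r^(2-b)) * ((m+1 : ℝ) * (c / r^a)^m) := by rw [← expand]; exact key
      _ ≤ (Real.exp r * r^(2-b)) * ((m+1 : ℝ) * (1/2:ℝ)^m) := by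
          have h0 : (0:ℝ) ≤ c / r ^ a := div_nonneg hc hrapos.le
          gcongr
      _ = (Real.exp r * r^(2-b)) * ((m:ℝ) + 1) * (1/2:ℝ)^m := by ring
lemma rpow_nat_mul {x : ℝ} (hx : 0 ≤ x) (a : ℝ) (n : ℕ) :
    (x ^ a) ^ n = x ^ (a * n) := by
  rw [← Real.rpow_natCast (x ^ a) n, ← Real.rpow_mul hx]

/-- summability of the basic ML-type series, no `n+1` factor -/

lemma ml_summable' {a b : ℝ} (ha : 0 < a) (hb : 0 < b) {c : ℝ} (hc : 0 ≤ c) :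
    Summable (fun n : ℕ => c ^ n / Real.Gamma (a * n + b)) := by
  refine Summable.of_nonneg_of_le (fun n => ?_) (fun n => ?_) (ml_summable ha hb hc)
  · have := Real.Gamma_pos_of_pos (show 0 < a * n + b by positivity)
    positivity
  · have hg := Real.Gamma_pos_of_pos (show 0 < a * n + b by positivity)
    gcongr <;> nlinarith [pow_nonneg hc n]

lemma keyI (α l k : ℝ) (hα : 0 < α) (hα1 : α < 1) (hl : 0 < l)
    (φ : ℝ → ℝ) (hφ : ∀ t, φ t = (l - t) ^ (α - 1) * mittagLeffler α α (k * (l - t) ^ α))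
    (y : ℝ) (hy : y ∈ Set.Ioo 0 l) :
    RLIminusR (1-α) l φ y = ∑' n : ℕ, k^n * (l-y)^(α*n) / Real.Gamma (α*n+1) := by
  obtain ⟨hy0, hyl⟩ := hy
  have h1a : (0:ℝ) < 1 - α := by linarith
  set F : ℕ → ℝ → ℝ := fun n t => (k^n / Real.Gamma (α*n+α)) *
    ((l-t)^(α*n+α-1) * (t-y)^(-α)) with hF
  -- pointwise series representation on Ioo y l
  have claim1 : ∀ t ∈ Ioo y l, φ t * (t - y) ^ ((1-α) - 1) = ∑' n, F n t := by
    intro t ht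
    have hlt : 0 < l - t := by linarith [ht.2]
    have hts : 0 < t - y := by linarith [ht.1]
    have hexp : (1-α) - 1 = -α := by ring
    rw [hexp, hφ t, mittagLeffler]
    have hterm : ∀ n : ℕ, F n t =
        ((l-t)^(α-1) * (t-y)^(-α)) * ((k * (l-t)^α)^n / Real.Gamma (α*n+α)) := by
      intro n
      rw [mul_pow, rpow_nat_mul hlt.le α n]
      have : (l-t)^(α*n+α-1) = (l-t)^(α-1) * (l-t)^(α*n) := by
        rw [← Real.rpow_add hlt]; ring_nf
      rw [hF]; simp only []
      rw [this]; ring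
    calc (l-t)^(α-1) * (∑' n : ℕ, (k * (l-t)^α)^n / Real.Gamma (α*n+α)) * (t-y)^(-α)
        = ((l-t)^(α-1) * (t-y)^(-α)) * ∑' n : ℕ, (k * (l-t)^α)^n / Real.Gamma (α*n+α) := by
          ring
      _ = ∑' n : ℕ, ((l-t)^(α-1) * (t-y)^(-α)) * ((k * (l-t)^α)^n / Real.Gamma (α*n+α)) := by
          rw [tsum_mul_left]
      _ = ∑' n, F n t := by exact (tsum_congr fun n => (hterm n).symm)
  -- integrability of each F n
  have hInt : ∀ n : ℕ, IntegrableOn (F n) (Ioo y l) volume := by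
    intro n
    have hb := (intervalIntegrable_beta hyl
      (show -1 < α*n+α-1 by have := mul_nonneg hα.le (Nat.cast_nonneg (α := ℝ) n); linarith) (show -1 < -α by linarith)).const_mul
      (k^n / Real.Gamma (α*n+α))
    have := (intervalIntegrable_iff_integrableOn_Ioc_of_le hyl.le).mp hb
    exact this.mono_set Ioo_subset_Ioc_self
  -- value of the beta integral for each n
  have hval : ∀ n : ℕ, ∫ t in Ioo y l, (l-t)^(α*n+α-1) * (t-y)^(-α) =
      (l-y)^(α*n) * (Real.Gamma (α*n+α) * Real.Gamma (1-α) / Real.Gamma (α*n+1)) := by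
    intro n
    have h := betaScaled (a := y) (b := l) (u := α*n+α) (v := 1-α) hyl
      (by positivity) h1a
    have e1 : α*(n:ℝ)+α - 1 = (α*n+α) - 1 := by ring
    have e2 : -α = (1-α) - 1 := by ring
    have e3 : (α*n+α) + (1-α) - 1 = α*n := by ring
    have e4 : (α*n+α) + (1-α) = α*n+1 := by ring
    rw [e3, e4] at h
    rw [← MeasureTheory.integral_Ioc_eq_integral_Ioo,
      ← intervalIntegral.integral_of_le hyl.le, e2]
    exact h
  have hGn : ∀ n : ℕ, (0:ℝ) < Real.Gamma (α*n+α) := fun n => Real.Gamma_pos_of_pos (by positivity)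
  have hG1 : (0:ℝ) < Real.Gamma (1-α) := Real.Gamma_pos_of_pos h1a
  have hG2 : ∀ n : ℕ, (0:ℝ) < Real.Gamma (α*n+1) := fun n => Real.Gamma_pos_of_pos (by positivity)
  have hnormval : ∀ n : ℕ, ∫ t in Ioo y l, ‖F n t‖ =
      |k|^n * (l-y)^(α*n) * Real.Gamma (1-α) / Real.Gamma (α*n+1) := by
    intro n
    have hcong : ∀ t ∈ Ioo y l, ‖F n t‖ =
        (|k|^n / Real.Gamma (α*n+α)) * ((l-t)^(α*n+α-1) * (t-y)^(-α)) := by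
      intro t ht
      have hlt : 0 < l - t := by linarith [ht.2]
      have hts : 0 < t - y := by linarith [ht.1]
      rw [hF]; simp only []
      rw [Real.norm_eq_abs, abs_mul, abs_div, abs_pow, abs_of_pos (hGn n), abs_mul,
        abs_of_pos (Real.rpow_pos_of_pos hlt _), abs_of_pos (Real.rpow_pos_of_pos hts _)]
    rw [setIntegral_congr_fun measurableSet_Ioo hcong, MeasureTheory.integral_const_mul,
      hval n]
    field_simp
  have hsummable_norm : Summable (fun n => ∫ t in Ioo y l, ‖F n t‖) := by
    have hly : (0:ℝ) < l - y := by linarith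
    set c := |k| * (l-y)^α with hc
    have hc0 : 0 ≤ c := mul_nonneg (abs_nonneg k) (Real.rpow_pos_of_pos hly α).le
    have hcn : ∀ n : ℕ, |k|^n * (l-y)^(α*n) = c^n := by
      intro n; rw [hc, mul_pow, rpow_nat_mul hly.le]
    refine Summable.of_nonneg_of_le (fun n => ?_) (fun n => ?_)
      ((ml_summable hα one_pos hc0).mul_left (Real.Gamma (1-α)))
    · rw [hnormval n, hcn n]; positivity
    · rw [hnormval n, hcn n]
      have e : c ^ n * Real.Gamma (1-α) / Real.Gamma (α*↑n+1)
          = Real.Gamma (1-α) * (c^n / Real.Gamma (α*↑n+1)) := by ring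
      rw [e]
      have hle : c^n / Real.Gamma (α*↑n+1) ≤ (((n:ℝ))+1) * c^n / Real.Gamma (α*↑n+1) := by
        gcongr
        nlinarith [pow_nonneg hc0 n]
      exact mul_le_mul_of_nonneg_left hle hG1.le
  have hswap := MeasureTheory.integral_tsum_of_summable_integral_norm
    (μ := volume.restrict (Ioo y l)) (F := F) (fun n => hInt n) hsummable_norm
  rw [RLIminusR, intervalIntegral.integral_of_le hyl.le,
    MeasureTheory.integral_Ioc_eq_integral_Ioo,
    setIntegral_congr_fun measurableSet_Ioo claim1, ← hswap]
  have hvals : ∀ n : ℕ, ∫ t in Ioo y l, F n t =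
      k^n * (l-y)^(α*n) * Real.Gamma (1-α) / Real.Gamma (α*n+1) := by
    intro n
    rw [hF]; simp only []
    rw [MeasureTheory.integral_const_mul, hval n]
    field_simp
  rw [show (fun n => ∫ t in Ioo y l, F n t) = fun n : ℕ =>
      k^n * (l-y)^(α*n) * Real.Gamma (1-α) / Real.Gamma (α*n+1) from funext hvals]
  rw [← tsum_mul_left]
  refine tsum_congr fun n => ?_
  field_simp

/-- The Mittag-Leffler function solves the homogeneous right-sided fractional equation:
for `0 < α < 1`, `l > 0`, `k ∈ ℝ` and `φ(s) = (l-s)^{α-1} E_{α,α}(k(l-s)^α)`, one has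
`(D_{l-}^α φ)(s) = k φ(s)` for every `s ∈ (0,l)`. -/
theorem mittagLeffler_solves_right_fracDeriv_eq
    (α l k : ℝ) (hα : 0 < α) (hα1 : α < 1) (hl : 0 < l)
    (φ : ℝ → ℝ)
    (hφ : ∀ t, φ t = (l - t) ^ (α - 1) * mittagLeffler α α (k * (l - t) ^ α)) :
    ∀ s ∈ Set.Ioo 0 l, RLDminusR α l φ s = k * φ s := by
  intro s hs
  obtain ⟨hs0, hsl⟩ := hs
  set s₁ := (s + l) / 2 with hs₁
  have hss₁ : s < s₁ := by simp only [hs₁]; linarith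
  have hs₁l : s₁ < l := by simp only [hs₁]; linarith
  have hls₁ : (0:ℝ) < l - s₁ := by linarith
  set T : Set ℝ := Ioo 0 s₁ with hT
  have hsT : s ∈ T := ⟨hs0, hss₁⟩
  have hTsub : T ⊆ Ioo 0 l := fun z hz => ⟨hz.1, lt_trans hz.2 hs₁l⟩
  -- the series functions
  set g : ℕ → ℝ → ℝ := fun n z => (k^n / Real.Gamma (α*n+1)) * (l-z)^(α*n) with hg
  set g' : ℕ → ℝ → ℝ := fun n z =>
    (k^n / Real.Gamma (α*n+1)) * (α*n * (l-z)^(α*n-1) * (-1)) with hg'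
  have hG2 : ∀ n : ℕ, (0:ℝ) < Real.Gamma (α*n+1) := fun n => Real.Gamma_pos_of_pos (by positivity)
  have hGα : ∀ n : ℕ, (0:ℝ) < Real.Gamma (α*n+α) := fun n => Real.Gamma_pos_of_pos (by positivity)
  -- derivatives
  have hderiv : ∀ n : ℕ, ∀ z ∈ T, HasDerivAt (g n) (g' n z) z := by
    intro n z hz
    have hlz : 0 < l - z := by linarith [lt_trans hz.2 hs₁l]
    have h1 : HasDerivAt (fun z : ℝ => l - z) (-1) z := by
      simpa using ((hasDerivAt_id z).const_sub l)
    have h2 : HasDerivAt (fun z : ℝ => (l-z)^(α*n))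
        (α*n * (l-z)^(α*n-1) * (-1)) z :=
      (Real.hasDerivAt_rpow_const (Or.inl hlz.ne')).comp z h1
    exact h2.const_mul _
  -- bound on derivatives on T
  set c : ℝ := |k| * l ^ α with hc
  have hc0 : 0 ≤ c := mul_nonneg (abs_nonneg k) (Real.rpow_pos_of_pos hl α).le
  set u : ℕ → ℝ := fun n => (α / (l - s₁)) * ((n : ℝ) * c^n / Real.Gamma (α*n+1)) with hu
  have hbound : ∀ n : ℕ, ∀ z ∈ T, ‖g' n z‖ ≤ u n := by
    intro n z hz
    have hlz : 0 < l - z := by linarith [lt_trans hz.2 hs₁l]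
    have hlzs : l - s₁ ≤ l - z := by linarith [hz.2]
    rcases Nat.eq_zero_or_pos n with rfl | hn
    · simp [hg', hu]
    · have hαn : (0:ℝ) < α * n := by positivity
      have hnorm : ‖g' n z‖ = |k|^n / Real.Gamma (α*n+1) * (α*n * (l-z)^(α*n-1)) := by
        rw [hg']; simp only []
        rw [Real.norm_eq_abs, abs_mul, abs_mul, abs_mul, abs_div, abs_pow,
          abs_of_pos (hG2 n), abs_of_pos hαn, abs_of_pos (Real.rpow_pos_of_pos hlz _)]
        simp [abs_of_nonpos]
      rw [hnorm, hu]; simp only []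
      have hstep : (l-z)^(α*n-1) ≤ l^(α*n) / (l - s₁) := by
        rw [show α*(n:ℝ)-1 = α*n - 1 from rfl, Real.rpow_sub hlz, Real.rpow_one]
        apply div_le_div₀ (by positivity)
          (Real.rpow_le_rpow hlz.le (by linarith [hz.1]) hαn.le) hls₁ hlzs
      calc |k|^n / Real.Gamma (α*n+1) * (α*n * (l-z)^(α*n-1))
          ≤ |k|^n / Real.Gamma (α*n+1) * (α*n * (l^(α*n) / (l - s₁))) := by
            gcongr
          _ = (α / (l - s₁)) * ((n : ℝ) * (|k|^n * l^(α*n)) / Real.Gamma (α*n+1)) := by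
            field_simp
          _ = (α / (l - s₁)) * ((n : ℝ) * c^n / Real.Gamma (α*n+1)) := by
            rw [hc, mul_pow, rpow_nat_mul hl.le]
  have husum : Summable u := by
    apply Summable.mul_left
    refine Summable.of_nonneg_of_le (fun n => ?_) (fun n => ?_) (ml_summable hα one_pos hc0)
    · have := hG2 n; positivity
    · have := hG2 n
      gcongr
      nlinarith [pow_nonneg hc0 n]
  have hg0sum : Summable (fun n => g n s) := by
    have hls : (0:ℝ) < l - s := by linarith
    set c' : ℝ := |k| * (l-s) ^ α with hc'
    have hc'0 : 0 ≤ c' := mul_nonneg (abs_nonneg k) (Real.rpow_pos_of_pos hls α).le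
    refine Summable.of_norm ?_
    refine Summable.of_nonneg_of_le (fun n => norm_nonneg _) (fun n => ?_)
      (ml_summable' hα one_pos hc'0)
    rw [hg]; simp only []
    rw [Real.norm_eq_abs, abs_mul, abs_div, abs_pow, abs_of_pos (hG2 n),
      abs_of_pos (Real.rpow_pos_of_pos hls _), hc', mul_pow, rpow_nat_mul hls.le]
    rw [div_mul_eq_mul_div]
  -- differentiate the series
  have hDer : HasDerivAt (fun z => ∑' n, g n z) (∑' n, g' n s) s :=
    hasDerivAt_tsum_of_isPreconnected husum isOpen_Ioo isPreconnected_Ioo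
      hderiv hbound hsT hg0sum hsT
  -- identify RLIminusR with the series near s
  have hEq : RLIminusR (1-α) l φ =ᶠ[𝓝 s] fun z => ∑' n, g n z := by
    filter_upwards [isOpen_Ioo.mem_nhds hsT] with z hz
    rw [keyI α l k hα hα1 hl φ hφ z (hTsub hz)]
    exact tsum_congr fun n => by rw [hg]; simp only []; ring
  have hderiv_eq : deriv (RLIminusR (1-α) l φ) s = ∑' n, g' n s := by
    rw [hEq.deriv_eq]
    exact hDer.deriv
  rw [RLDminusR, hderiv_eq]
  -- now compute -∑' g' n s = k * φ s
  have hls : (0:ℝ) < l - s := by linarith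
  have hsum_g' : Summable (fun n => g' n s) :=
    Summable.of_norm (Summable.of_nonneg_of_le (fun n => norm_nonneg _)
      (fun n => hbound n s hsT) husum)
  rw [← tsum_neg]
  have hshift := Summable.tsum_eq_zero_add (hsum_g'.neg)
  rw [hshift]
  have hzero : -g' 0 s = 0 := by simp [hg']
  rw [hzero, zero_add]
  -- right-hand side as a series
  have hRHS : k * φ s = ∑' n : ℕ, k^(n+1) * (l-s)^(α*n+α-1) / Real.Gamma (α*n+α) := by
    rw [hφ s, mittagLeffler]
    have hterm : ∀ n : ℕ, k^(n+1) * (l-s)^(α*n+α-1) / Real.Gamma (α*n+α)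
        = (k * (l-s)^(α-1)) * ((k * (l-s)^α)^n / Real.Gamma (α*n+α)) := by
      intro n
      rw [mul_pow, rpow_nat_mul hls.le α n]
      have he : (l-s)^(α*n+α-1) = (l-s)^(α-1) * (l-s)^(α*n) := by
        rw [← Real.rpow_add hls]; ring_nf
      rw [he, pow_succ]
      ring
    rw [show (fun n : ℕ => k^(n+1) * (l-s)^(α*n+α-1) / Real.Gamma (α*n+α))
        = fun n : ℕ => (k * (l-s)^(α-1)) * ((k * (l-s)^α)^n / Real.Gamma (α*n+α))
      from funext hterm] at *
    rw [tsum_mul_left]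
    ring
  rw [hRHS]
  refine tsum_congr fun n => ?_
  -- -g' (n+1) s = k^(n+1) * (l-s)^(α*n+α-1) / Γ(α*n+α)
  rw [hg']; simp only []
  have hαn1 : (0:ℝ) < α * (n+1 : ℕ) := by positivity
  have hGrec : Real.Gamma (α*(n+1:ℕ)+1) = (α*(n+1:ℕ)) * Real.Gamma (α*(n+1:ℕ)) := by
    rw [Real.Gamma_add_one hαn1.ne']
  have he1 : α*((n+1:ℕ):ℝ) - 1 = α*n+α-1 := by push_cast; ring
  have he2 : α*((n+1:ℕ):ℝ) = α*n+α := by push_cast; ring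
  rw [hGrec, he1, he2]
  have hG := hGα n
  field_simp
end
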